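/- arXiv:1402.3000 — 4 statements merged into one kernel-verified Lean document; each statement's English description precedes it below -/
import Mathlib

section
/- Let A be an n×n integer matrix all of whose eigenvalues have modulus strictly greater than one, and let D ⊂ ℤⁿ be a complete set of residue class representatives of ℤⁿ/Aℤⁿ. Then there exists a unique nonempty compact set T ⊂ ℝⁿ satisfying A·T = T + D (i.e., the image of T under A equals the union of translates T + d for d ∈ D). -/
open Matrix Set

attribute [local instance] Matrix.linftyOpNormedAddCommGroup Matrix.linftyOpNormedRing
  Matrix.linftyOpNormedAlgebra

open scoped ENNReal NNReal

open EMetric in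
/-- Hausdorff edistance contracts under Lipschitz images (for nonempty sets). -/
lemma auxHE_image_le {α β : Type*} [PseudoEMetricSpace α] [PseudoEMetricSpace β]
    {f : α → β} {c : NNReal} (hf : LipschitzWith c f) {s t : Set α}
    (hs : s.Nonempty) (ht : t.Nonempty) :
    hausdorffEdist (f '' s) (f '' t) ≤ c * hausdorffEdist s t := by
  rcases eq_or_ne c 0 with rfl | hc
  · refine le_trans (hausdorffEdist_le_of_mem_edist ?_ ?_) (zero_le)
    · rintro x ⟨a, ha, rfl⟩
      exact ⟨f ht.choose, mem_image_of_mem f ht.choose_spec, by simpa using hf a ht.choose⟩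
    · rintro x ⟨a, ha, rfl⟩
      exact ⟨f hs.choose, mem_image_of_mem f hs.choose_spec, by simpa using hf a hs.choose⟩
  · apply ENNReal.le_of_forall_pos_le_add
    intro ε hε htop
    have hctop : (c : ℝ≥0∞) ≠ 0 := by exact_mod_cast hc
    have hH : hausdorffEdist s t ≠ ⊤ := by
      intro h
      rw [h, ENNReal.mul_top hctop] at htop
      exact (lt_irrefl _ htop).elim
    have hdiv : (ε : ℝ≥0∞) / c ≠ 0 := by
      simp [ENNReal.div_eq_zero_iff, hε.ne']
    have hlt : hausdorffEdist s t < hausdorffEdist s t + ε / c :=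
      ENNReal.lt_add_right hH hdiv
    have hmul : (c : ℝ≥0∞) * (hausdorffEdist s t + ε / c)
        = c * hausdorffEdist s t + ε := by
      rw [mul_add, ENNReal.mul_div_cancel hctop (by exact ENNReal.coe_ne_top)]
    refine hausdorffEdist_le_of_mem_edist ?_ ?_
    · rintro x ⟨a, ha, rfl⟩
      obtain ⟨b, hb, hab⟩ := exists_edist_lt_of_hausdorffEdist_lt ha hlt
      refine ⟨f b, mem_image_of_mem f hb, ?_⟩
      calc edist (f a) (f b) ≤ c * edist a b := hf a b
        _ ≤ c * (hausdorffEdist s t + ε / c) := mul_le_mul_right hab.le c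
        _ = c * hausdorffEdist s t + ε := hmul
    · rintro x ⟨a, ha, rfl⟩
      have hlt' : hausdorffEdist t s < hausdorffEdist s t + ε / c := by
        exact Metric.hausdorffEDist_comm.trans_lt hlt
      obtain ⟨b, hb, hab⟩ := exists_edist_lt_of_hausdorffEdist_lt ha hlt'
      refine ⟨f b, mem_image_of_mem f hb, ?_⟩
      calc edist (f a) (f b) ≤ c * edist a b := hf a b
        _ ≤ c * (hausdorffEdist s t + ε / c) := mul_le_mul_right hab.le c
        _ = c * hausdorffEdist s t + ε := hmul

open EMetric in
/-- Hausdorff edistance of finite unions is bounded by a uniform bound on the pieces. -/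
lemma auxHE_biUnion_le {α ι : Type*} [PseudoEMetricSpace α] {I : Finset ι}
    {s t : ι → Set α} {r : ℝ≥0∞}
    (h : ∀ i ∈ I, hausdorffEdist (s i) (t i) ≤ r) :
    hausdorffEdist (⋃ i ∈ I, s i) (⋃ i ∈ I, t i) ≤ r := by
  apply ENNReal.le_of_forall_pos_le_add
  intro ε hε hr
  have hε' : (ε : ℝ≥0∞) ≠ 0 := by exact_mod_cast hε.ne'
  refine hausdorffEdist_le_of_mem_edist ?_ ?_
  · intro x hx
    obtain ⟨i, hi, hxi⟩ := mem_iUnion₂.1 hx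
    obtain ⟨y, hy, hxy⟩ := exists_edist_lt_of_hausdorffEdist_lt hxi
      ((h i hi).trans_lt (ENNReal.lt_add_right hr.ne hε'))
    exact ⟨y, mem_iUnion₂.2 ⟨i, hi, hy⟩, hxy.le⟩
  · intro x hx
    obtain ⟨i, hi, hxi⟩ := mem_iUnion₂.1 hx
    have h' : hausdorffEdist (t i) (s i) ≤ r := by exact Metric.hausdorffEDist_comm.trans_le (h i hi)
    obtain ⟨y, hy, hxy⟩ := exists_edist_lt_of_hausdorffEdist_lt hxi
      (h'.trans_lt (ENNReal.lt_add_right hr.ne hε'))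
    exact ⟨y, mem_iUnion₂.2 ⟨i, hi, hy⟩, hxy.le⟩


/-- The spectrum of a complex matrix is the set of roots of its characteristic polynomial. -/
lemma aux_mem_spectrum_iff {n : ℕ} (M : Matrix (Fin n) (Fin n) ℂ) (μ : ℂ) :
    μ ∈ spectrum ℂ M ↔ μ ∈ M.charpoly.roots := by
  have heval : M.charpoly.eval μ = (Matrix.scalar (Fin n) μ - M).det := by
    rw [Matrix.charpoly, eval_det, matPolyEquiv_charmatrix]
    simp
  have halg : algebraMap ℂ (Matrix (Fin n) (Fin n) ℂ) μ = Matrix.scalar (Fin n) μ := by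
    rw [Matrix.scalar_apply, Matrix.algebraMap_eq_diagonal]
    simp
  rw [Polynomial.mem_roots M.charpoly_monic.ne_zero, Polynomial.IsRoot, heval,
      spectrum.mem_iff, halg, Matrix.isUnit_iff_isUnit_det, isUnit_iff_ne_zero, not_not]

/-- Spectral estimate: some power of the inverse real matrix has operator norm `< 1`. -/
lemma aux_exists_pow_nnnorm_lt {n : ℕ} (A : Matrix (Fin n) (Fin n) ℤ)
    (hexp : ∀ μ ∈ (A.map (Int.cast : ℤ → ℂ)).charpoly.roots, 1 < ‖μ‖) :
    A.det ≠ 0 ∧ ∃ k, 1 ≤ k ∧ ‖((A.map (Int.cast : ℤ → ℝ))⁻¹) ^ k‖₊ < 1 := by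
  set C : Matrix (Fin n) (Fin n) ℂ := A.map (Int.cast : ℤ → ℂ) with hC
  haveI : CompleteSpace (Matrix (Fin n) (Fin n) ℂ) := FiniteDimensional.complete ℂ _
  have hroots0 : (0 : ℂ) ∉ C.charpoly.roots := by
    intro h
    have := hexp 0 h
    norm_num at this
  have hdetC : C.det ≠ 0 := by
    rw [Matrix.det_eq_prod_roots_charpoly_of_splits (IsAlgClosed.splits _)]
    exact Multiset.prod_ne_zero hroots0
  have hdetA : A.det ≠ 0 := by
    intro h
    apply hdetC
    have : C.det = ((A.det : ℤ) : ℂ) := by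
      rw [hC]
      exact (RingHom.map_det (Int.castRingHom ℂ) A).symm
    rw [this, h]
    simp
  refine ⟨hdetA, ?_⟩
  have hCu : IsUnit C := (Matrix.isUnit_iff_isUnit_det C).mpr (isUnit_iff_ne_zero.mpr hdetC)
  set u : (Matrix (Fin n) (Fin n) ℂ)ˣ := hCu.unit with hu
  set r : ℝ≥0 := C.charpoly.roots.toFinset.sup (fun z => ‖z‖₊⁻¹) with hr
  have hr1 : r < 1 := by
    rcases C.charpoly.roots.toFinset.eq_empty_or_nonempty with he | hne
    · rw [hr, he]
      simp
    · rw [hr, Finset.sup_lt_iff (by norm_num : (⊥ : ℝ≥0) < 1)]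
      intro z hz
      have h1z : (1 : ℝ≥0) < ‖z‖₊ := by
        have := hexp z (Multiset.mem_toFinset.mp hz)
        rwa [← NNReal.coe_lt_coe, NNReal.coe_one, coe_nnnorm]
      exact inv_lt_one_of_one_lt₀ h1z
  have hspec : ∀ μ ∈ spectrum ℂ ((↑u⁻¹ : Matrix (Fin n) (Fin n) ℂ)), ‖μ‖₊ ≤ r := by
    intro μ hμ
    have hμ0 : μ ≠ 0 := by
      rintro rfl
      exact (spectrum.zero_mem_iff ℂ).mp hμ (Units.isUnit u⁻¹)
    have hinv : μ⁻¹ ∈ spectrum ℂ ((↑u : Matrix (Fin n) (Fin n) ℂ)) := by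
      have h := (spectrum.inv_mem_iff (r := (Units.mk0 μ hμ0)⁻¹) (a := u)).mpr
      simp only [inv_inv, Units.val_inv_eq_inv_val, Units.val_mk0] at h
      exact h hμ
    have hroot : μ⁻¹ ∈ C.charpoly.roots := by
      rw [← aux_mem_spectrum_iff]
      rwa [hu, IsUnit.unit_spec] at hinv
    have : ‖μ⁻¹‖₊⁻¹ ≤ r :=
      Finset.le_sup (f := fun z => ‖z‖₊⁻¹) (Multiset.mem_toFinset.mpr hroot)
    rwa [nnnorm_inv, inv_inv] at this
  have hsr : spectralRadius ℂ ((↑u⁻¹ : Matrix (Fin n) (Fin n) ℂ)) < 1 := by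
    have hle : spectralRadius ℂ ((↑u⁻¹ : Matrix (Fin n) (Fin n) ℂ)) ≤ (r : ℝ≥0∞) := by
      unfold spectralRadius
      exact iSup₂_le fun μ hμ => ENNReal.coe_le_coe.mpr (hspec μ hμ)
    exact hle.trans_lt (by exact_mod_cast hr1)
  have hev : ∀ᶠ k : ℕ in Filter.atTop,
      ((‖(↑u⁻¹ : Matrix (Fin n) (Fin n) ℂ) ^ k‖₊ : ℝ≥0∞) ^ (1 / (k : ℝ)) < 1) :=
    (spectrum.pow_nnnorm_pow_one_div_tendsto_nhds_spectralRadius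
      ((↑u⁻¹ : Matrix (Fin n) (Fin n) ℂ))).eventually_lt_const hsr
  obtain ⟨k, hklt, hk1⟩ := (hev.and (Filter.eventually_ge_atTop 1)).exists
  refine ⟨k, hk1, ?_⟩
  have hklt' : (‖(↑u⁻¹ : Matrix (Fin n) (Fin n) ℂ) ^ k‖₊ : ℝ≥0∞) < 1 := by
    by_contra h
    push_neg at h
    exact absurd (ENNReal.one_le_rpow h (by positivity : (0:ℝ) < 1 / (k:ℝ))) (not_le.mpr hklt)
  -- identify `↑u⁻¹` with `C⁻¹`
  have huC : (↑u⁻¹ : Matrix (Fin n) (Fin n) ℂ) = C⁻¹ := by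
    rw [Matrix.coe_units_inv, hu, IsUnit.unit_spec]
  rw [huC] at hklt'
  -- bridge to the real matrix
  set B : Matrix (Fin n) (Fin n) ℝ := A.map (Int.cast : ℤ → ℝ) with hB
  set f : ℝ →+* ℂ := algebraMap ℝ ℂ with hf
  have hBC : B.map f = C := by
    ext i j
    simp [hB, hC, Matrix.map_apply, hf]
  have hdetB : IsUnit B.det := by
    have : B.det = ((A.det : ℤ) : ℝ) := by
      rw [hB]; exact (RingHom.map_det (Int.castRingHom ℝ) A).symm
    rw [this]
    exact isUnit_iff_ne_zero.mpr (by exact_mod_cast hdetA)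
  have hinvmap : (B⁻¹).map f = C⁻¹ := by
    have h1 : B * B⁻¹ = 1 := Matrix.mul_nonsing_inv B hdetB
    have h2 : (B.map f) * ((B⁻¹).map f) = 1 := by
      rw [← Matrix.map_mul, h1, Matrix.map_one f (map_zero f) (map_one f)]
    rw [hBC] at h2
    exact (Matrix.inv_eq_right_inv h2).symm
  have hpow : ((B⁻¹) ^ k).map f = C⁻¹ ^ k := by
    rw [← hinvmap, ← RingHom.mapMatrix_apply, ← RingHom.mapMatrix_apply, map_pow]
  have hnorm : ‖(B⁻¹) ^ k‖₊ = ‖C⁻¹ ^ k‖₊ := by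
    rw [← hpow, Matrix.linfty_opNNNorm_def, Matrix.linfty_opNNNorm_def]
    congr 1
    ext i
    congr 1
    ext j
    simp [Matrix.map_apply, hf, Complex.nnnorm_real]
  rw [hnorm]
  exact_mod_cast hklt'

/-- existence and uniqueness of the self-affine tile `T` with `A·T = T + D`. -/
theorem selfAffineTile_existsUnique (n : ℕ) (A : Matrix (Fin n) (Fin n) ℤ)
    (hexp : ∀ μ ∈ (A.map (Int.cast : ℤ → ℂ)).charpoly.roots, 1 < ‖μ‖)
    (D : Set (Fin n → ℤ))
    (hD : ∀ z : Fin n → ℤ, ∃! d, d ∈ D ∧ ∃ y : Fin n → ℤ, z = d + A.mulVec y) :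
    ∃! T : Set (Fin n → ℝ),
      T.Nonempty ∧ IsCompact T ∧
      (fun x => (A.map (Int.cast : ℤ → ℝ)).mulVec x) '' T
        = ⋃ d ∈ D, (fun x => x + fun i => ((d i : ℝ))) '' T := by
  classical
  obtain ⟨hdetA, k, hk1, hklt⟩ := aux_exists_pow_nnnorm_lt A hexp
  set B : Matrix (Fin n) (Fin n) ℝ := A.map (Int.cast : ℤ → ℝ) with hB
  -- basic facts about B
  have hdetB : IsUnit B.det := by
    have : B.det = ((A.det : ℤ) : ℝ) := (RingHom.map_det (Int.castRingHom ℝ) A).symm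
    rw [this]
    exact isUnit_iff_ne_zero.mpr (by exact_mod_cast hdetA)
  have hBinv : B * B⁻¹ = 1 := Matrix.mul_nonsing_inv B hdetB
  have hinvB : B⁻¹ * B = 1 := Matrix.nonsing_inv_mul B hdetB
  have hBL : ∀ v : Fin n → ℝ, B.mulVec (B⁻¹.mulVec v) = v := by
    intro v; rw [Matrix.mulVec_mulVec, hBinv, Matrix.one_mulVec]
  have hLB : ∀ v : Fin n → ℝ, B⁻¹.mulVec (B.mulVec v) = v := by
    intro v; rw [Matrix.mulVec_mulVec, hinvB, Matrix.one_mulVec]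
  -- uniqueness of residue representatives
  have hkey : ∀ d₁ ∈ D, ∀ d₂ ∈ D, (∀ i, ((A.det.natAbs : ℤ)) ∣ (d₁ i - d₂ i)) → d₁ = d₂ := by
    intro d₁ h₁ d₂ h₂ hdvd
    have hdvd' : ∀ i, A.det ∣ (d₁ i - d₂ i) := fun i => Int.natAbs_dvd.mp (hdvd i)
    set w : Fin n → ℤ := fun i => (d₁ i - d₂ i) / A.det with hw
    have hw' : d₁ - d₂ = A.det • w := by
      funext i
      simp only [Pi.sub_apply, Pi.smul_apply, smul_eq_mul, hw]
      exact (Int.mul_ediv_cancel' (hdvd' i)).symm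
    have hAv : A.mulVec ((A.adjugate).mulVec w) = A.det • w := by
      rw [Matrix.mulVec_mulVec, Matrix.mul_adjugate, Matrix.smul_mulVec,
        Matrix.one_mulVec]
    have hrepr : d₁ = d₂ + A.mulVec ((A.adjugate).mulVec w) := by
      rw [hAv, ← hw']
      abel
    obtain ⟨d, hd, hun⟩ := hD d₁
    have e1 : d₁ = d := hun d₁ ⟨h₁, 0, by simp⟩
    have e2 : d₂ = d := hun d₂ ⟨h₂, _, hrepr⟩
    rw [e1, e2]
  -- D is finite
  haveI : NeZero (A.det.natAbs) := ⟨Int.natAbs_ne_zero.mpr hdetA⟩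
  have hinj : Function.Injective
      (fun d : D => (fun i => ((d : Fin n → ℤ) i : ZMod A.det.natAbs))) := by
    intro d₁ d₂ h
    apply Subtype.ext
    refine hkey _ d₁.2 _ d₂.2 fun i => ?_
    have h2 : (((d₁ : Fin n → ℤ) i : ℤ) : ZMod A.det.natAbs)
        = (((d₂ : Fin n → ℤ) i : ℤ) : ZMod A.det.natAbs) := congrFun h i
    have h3 := (ZMod.intCast_eq_intCast_iff _ _ _).mp h2
    exact dvd_sub_comm.mp (Int.ModEq.dvd h3)
  have hfinD : D.Finite := Set.finite_coe_iff.mp (Finite.of_injective _ hinj)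
  set Dfin : Finset (Fin n → ℤ) := hfinD.toFinset with hDfinDef
  have hDfin : (Dfin : Set (Fin n → ℤ)) = D := hfinD.coe_toFinset
  have hDne : Dfin.Nonempty := by
    obtain ⟨d, ⟨hdD, _⟩, -⟩ := hD 0
    exact ⟨d, hfinD.mem_toFinset.mpr hdD⟩
  -- the cast of an integer vector to a real vector
  set ρ : (Fin n → ℤ) → (Fin n → ℝ) := fun d i => ((d i : ℝ)) with hρ
  -- the Hutchinson operator on sets
  set Fset : Set (Fin n → ℝ) → Set (Fin n → ℝ) :=
    fun S => ⋃ d ∈ Dfin, (fun x => B⁻¹.mulVec (x + ρ d)) '' S with hFset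
  -- rewrite the target union over D as a union over Dfin
  have hDU : ∀ T : Set (Fin n → ℝ),
      (⋃ d ∈ D, (fun x => x + fun i => ((d i : ℝ))) '' T)
        = ⋃ d ∈ Dfin, (fun x => x + ρ d) '' T := by
    intro T
    rw [← hDfin, Finset.set_biUnion_coe]
  -- the image identity
  have him : ∀ S : Set (Fin n → ℝ),
      (fun x => B.mulVec x) '' (Fset S) = ⋃ d ∈ Dfin, (fun x => x + ρ d) '' S := by
    intro S
    rw [hFset]
    simp only [image_iUnion]
    refine iUnion₂_congr fun d _ => ?_
    rw [← image_comp]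
    congr 1
    funext x
    simp [Function.comp, hBL]
  have hbij : Function.Bijective (fun x : Fin n → ℝ => B.mulVec x) :=
    Function.bijective_iff_has_inverse.mpr
      ⟨fun x => B⁻¹.mulVec x, fun x => hLB x, fun x => hBL x⟩
  have hinjim : Function.Injective (Set.image (fun x : Fin n → ℝ => B.mulVec x)) :=
    Set.image_injective.mpr hbij.injective
  -- fixed sets of Fset are exactly solutions of the set equation
  have hfix_iff : ∀ T : Set (Fin n → ℝ),
      (Fset T = T ↔
        (fun x => B.mulVec x) '' T = ⋃ d ∈ Dfin, (fun x => x + ρ d) '' T) := by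
    intro T
    constructor
    · intro h
      have h2 := him T
      rwa [h] at h2
    · intro h
      apply hinjim
      rw [him T]
      exact h.symm
  -- structure of the iterates of Fset
  have hiter : ∀ m : ℕ, ∃ V : Finset (Fin n → ℝ), V.Nonempty ∧ ∀ S : Set (Fin n → ℝ),
      Fset^[m] S = ⋃ v ∈ V, (fun x => ((B⁻¹) ^ m).mulVec x + v) '' S := by
    intro m
    induction m with
    | zero =>
      refine ⟨{0}, Finset.singleton_nonempty _, fun S => ?_⟩
      simp [Matrix.one_mulVec, image_id']
    | succ m ih =>
      obtain ⟨V, hVne, hV⟩ := ih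
      have key : ∀ z dv v : Fin n → ℝ,
          ((B⁻¹) ^ m).mulVec (B⁻¹.mulVec (z + dv)) + v
            = ((B⁻¹) ^ (m + 1)).mulVec z + (((B⁻¹) ^ (m + 1)).mulVec dv + v) := by
        intro z dv v
        rw [Matrix.mulVec_mulVec, ← pow_succ, Matrix.mulVec_add, add_assoc]
      refine ⟨(V ×ˢ Dfin).image (fun p => ((B⁻¹) ^ (m + 1)).mulVec (ρ p.2) + p.1),
        (hVne.product hDne).image _, fun S => ?_⟩
      rw [Function.iterate_succ_apply, hV (Fset S)]
      ext x
      simp only [hFset, mem_iUnion, Finset.mem_image, Finset.mem_product, Set.mem_image,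
        exists_prop, Prod.exists]
      constructor
      · rintro ⟨v, hv, y, hy, rfl⟩
        obtain ⟨d, hd, z, hz, rfl⟩ := hy
        exact ⟨_, ⟨v, d, ⟨hv, hd⟩, rfl⟩, z, hz, (key z (ρ d) v).symm⟩
      · rintro ⟨w, ⟨v, d, ⟨hv, hd⟩, rfl⟩, z, hz, rfl⟩
        exact ⟨v, hv, B⁻¹.mulVec (z + ρ d), ⟨d, hd, z, hz, rfl⟩, key z (ρ d) v⟩
  -- each affine map is Lipschitz
  have hlipvec : ∀ (N : Matrix (Fin n) (Fin n) ℝ) (v : Fin n → ℝ),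
      LipschitzWith ‖N‖₊ (fun x => N.mulVec x + v) := by
    intro N v
    apply LipschitzWith.of_dist_le_mul
    intro x y
    calc dist (N.mulVec x + v) (N.mulVec y + v) = ‖N.mulVec x - N.mulVec y‖ := by
          rw [dist_add_right, dist_eq_norm]
      _ = ‖N.mulVec (x - y)‖ := by rw [Matrix.mulVec_sub]
      _ ≤ ‖N‖ * ‖x - y‖ := Matrix.linfty_opNorm_mulVec _ _
      _ = ‖N‖ * dist x y := by rw [dist_eq_norm]
  -- Fset preserves nonempty compact sets
  have hcont : ∀ d : Fin n → ℤ, Continuous fun x : Fin n → ℝ => B⁻¹.mulVec (x + ρ d) := by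
    intro d
    have h1 : Continuous fun x : Fin n → ℝ => B⁻¹.mulVec x := by
      have := LinearMap.continuous_of_finiteDimensional (Matrix.mulVecLin B⁻¹)
      exact this
    exact h1.comp (continuous_id.add continuous_const)
  have hFne : ∀ S : Set (Fin n → ℝ), S.Nonempty → (Fset S).Nonempty := by
    rintro S ⟨x, hx⟩
    obtain ⟨d, hd⟩ := hDne
    exact ⟨_, mem_iUnion₂.2 ⟨d, hd, mem_image_of_mem _ hx⟩⟩
  have hFcp : ∀ S : Set (Fin n → ℝ), IsCompact S → IsCompact (Fset S) := by
    intro S hS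
    exact Dfin.isCompact_biUnion fun d _ => hS.image (hcont d)
  -- the Hutchinson operator on nonempty compact sets
  set F : TopologicalSpace.NonemptyCompacts (Fin n → ℝ) →
      TopologicalSpace.NonemptyCompacts (Fin n → ℝ) :=
    fun K => ⟨⟨Fset K, hFcp _ K.isCompact⟩, hFne _ K.nonempty⟩ with hF
  have hFcoe : ∀ K, ((F K : TopologicalSpace.NonemptyCompacts (Fin n → ℝ)) :
      Set (Fin n → ℝ)) = Fset K := fun K => rfl
  have hFiter : ∀ (m : ℕ) (K : TopologicalSpace.NonemptyCompacts (Fin n → ℝ)),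
      ((F^[m] K : TopologicalSpace.NonemptyCompacts (Fin n → ℝ)) : Set (Fin n → ℝ))
        = Fset^[m] (K : Set (Fin n → ℝ)) := by
    intro m
    induction m with
    | zero => intro K; rfl
    | succ m ih =>
      intro K
      rw [Function.iterate_succ_apply, Function.iterate_succ_apply, ih (F K), hFcoe]
  -- contraction
  set c : ℝ≥0 := ‖(B⁻¹) ^ k‖₊ with hc
  have hFK : ContractingWith c (F^[k]) := by
    refine ⟨hklt, fun K K' => ?_⟩
    have hedist : ∀ (K K' : TopologicalSpace.NonemptyCompacts (Fin n → ℝ)),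
        edist K K' = EMetric.hausdorffEdist (K : Set (Fin n → ℝ)) (K' : Set (Fin n → ℝ)) :=
      fun _ _ => rfl
    rw [hedist, hedist, hFiter, hFiter]
    obtain ⟨V, hVne, hV⟩ := hiter k
    rw [hV, hV]
    refine auxHE_biUnion_le fun v hv => ?_
    exact auxHE_image_le (hlipvec _ v) K.nonempty K'.nonempty
  haveI : Nonempty (TopologicalSpace.NonemptyCompacts (Fin n → ℝ)) :=
    ⟨⟨⟨{0}, isCompact_singleton⟩, Set.singleton_nonempty _⟩⟩
  set T₀ := hFK.fixedPoint (F^[k]) with hT₀def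
  have hT₀fix : Function.IsFixedPt F T₀ := hFK.isFixedPt_fixedPoint_iterate
  have hT₀set : Fset (T₀ : Set (Fin n → ℝ)) = (T₀ : Set (Fin n → ℝ)) := by
    conv_rhs => rw [← hT₀fix]
    exact (hFcoe T₀).symm
  refine ⟨(T₀ : Set (Fin n → ℝ)), ⟨T₀.nonempty, T₀.isCompact, ?_⟩, ?_⟩
  · rw [hDU]
    exact (hfix_iff _).mp hT₀set
  · rintro T' ⟨hne, hcp, heq⟩
    have h1 : Fset T' = T' := (hfix_iff T').mpr (by rw [← hDU]; exact heq)
    set K' : TopologicalSpace.NonemptyCompacts (Fin n → ℝ) := ⟨⟨T', hcp⟩, hne⟩ with hK'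
    have h2 : Function.IsFixedPt F K' := by
      apply TopologicalSpace.NonemptyCompacts.ext
      exact h1
    have h3 : Function.IsFixedPt (F^[k]) K' := h2.iterate k
    have h4 : K' = T₀ := hFK.fixedPoint_unique h3
    rw [← h4]
    rfl
end

section
/- Let n ≥ 2 and let M ⊂ ℝⁿ be a ℤⁿ-tile whose interior is connected. Then ∂M has no separating point: for every x ∈ ∂M, the set ∂M \ {x} is connected. -/
open Set

/-- The real vector obtained from an integer vector. -/
def intVecToReal {n : ℕ} (z : Fin n → ℤ) : Fin n → ℝ := fun i => (z i : ℝ)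

/-- `M` is a `ℤⁿ`-tile: compact, closure of its interior, boundary of Lebesgue measure
zero, and its `ℤⁿ`-translates cover `ℝⁿ` with pairwise disjoint interiors. -/
def IsZnTile {n : ℕ} (M : Set (Fin n → ℝ)) : Prop :=
  IsCompact M ∧ M = closure (interior M) ∧
  MeasureTheory.volume (frontier M) = 0 ∧
  (⋃ z : Fin n → ℤ, (fun x => x + intVecToReal z) '' M) = Set.univ ∧
  Pairwise fun z z' : Fin n → ℤ =>
    Disjoint (interior ((fun x => x + intVecToReal z) '' M))
      (interior ((fun x => x + intVecToReal z') '' M))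

section LiftingTheory

open Set Complex Real

namespace ZnAux

variable {E : Type*} [NormedAddCommGroup E] [NormedSpace ℝ E]

/-- Partial sums of arguments along the straight path `t ↦ t • y`. -/
noncomputable def liftSum (g : E → ℂ) (N : ℕ) (y : E) : ℝ :=
  Complex.arg (g 0) +
    ∑ k ∈ Finset.range N,
      Complex.arg (g ((((k : ℝ) + 1) / (N : ℝ)) • y) / g (((k : ℝ) / (N : ℝ)) • y))

lemma exp_arg_unit {w : ℂ} (hw : ‖w‖ = 1) : Complex.exp (w.arg * I) = w := by
  have hw0 : w ≠ 0 := by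
    intro h; rw [h] at hw; simp at hw
  conv_rhs => rw [← Complex.exp_log hw0]
  congr 1
  rw [Complex.log, hw, Real.log_one]
  simp

lemma exp_telescope (w : ℕ → ℂ) (hw : ∀ k, ‖w k‖ = 1) (N : ℕ) :
    Complex.exp ((∑ k ∈ Finset.range N, Complex.arg (w (k + 1) / w k) : ℝ) * I)
      = w N / w 0 := by
  have hne : ∀ k, w k ≠ 0 := fun k h => by have := hw k; rw [h] at this; simp at this
  induction N with
  | zero => simp [div_self (hne 0)]
  | succ N ih =>
      rw [Finset.sum_range_succ, Complex.ofReal_add, add_mul, Complex.exp_add, ih]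
      rw [exp_arg_unit (by rw [norm_div, hw, hw, div_one])]
      rw [div_mul_div_comm]
      field_simp [hne]

lemma exp_liftSum (g : E → ℂ) (h1 : ∀ y, ‖g y‖ = 1) {N : ℕ} (hN : 1 ≤ N)
    (y : E) : Complex.exp ((liftSum g N y : ℝ) * I) = g y := by
  have hne : ∀ z, g z ≠ 0 := fun z h => by have := h1 z; rw [h] at this; simp at this
  have hNne : (N : ℝ) ≠ 0 := Nat.cast_ne_zero.2 (by omega)
  set w : ℕ → ℂ := fun k => g (((k : ℝ) / (N : ℝ)) • y) with hwdef
  have hw : ∀ k, ‖w k‖ = 1 := fun k => h1 _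
  have hsum : liftSum g N y
      = Complex.arg (g 0) + ∑ k ∈ Finset.range N, Complex.arg (w (k + 1) / w k) := by
    unfold liftSum
    congr 1
    refine Finset.sum_congr rfl fun k _ => ?_
    have : (((k : ℕ) + 1 : ℕ) : ℝ) = (k : ℝ) + 1 := by push_cast; ring
    rw [hwdef]; norm_num
  rw [hsum, Complex.ofReal_add, add_mul, Complex.exp_add, exp_arg_unit (h1 0),
    exp_telescope w hw N]
  have hw0 : w 0 = g 0 := by
    show g ((((0:ℕ):ℝ) / (N:ℝ)) • y) = g 0
    norm_num
  have hwN : w N = g y := by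
    rw [hwdef]
    norm_num [div_self hNne]
  rw [hw0, hwN, mul_div_cancel₀ _ (hne 0)]

/-- `N` is a fine enough subdivision for the path `t ↦ t • y`. -/
def Fine (g : E → ℂ) (N : ℕ) (y : E) : Prop :=
  ∀ s t : ℝ, s ∈ Icc (0:ℝ) 1 → t ∈ Icc (0:ℝ) 1 → |s - t| ≤ 1 / (N : ℝ) →
    ‖g (s • y) - g (t • y)‖ ≤ 1 / 2

lemma re_ge_of_close {z : ℂ} (h : ‖z - 1‖ ≤ 1 / 2) : (1:ℝ)/2 ≤ z.re := by
  have h2 : (1 - z).re ≤ ‖1 - z‖ := Complex.re_le_norm _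
  have h3 : ‖1 - z‖ = ‖z - 1‖ := by
    rw [← neg_sub z 1, norm_neg]
  have : (1 - z).re = 1 - z.re := by simp
  linarith [h2, h3 ▸ h2]

lemma arg_abs_lt_pi_div_two {w : ℂ} (hw : ‖w‖ = 1) (hre : (1:ℝ)/2 ≤ w.re) :
    |w.arg| < π / 2 := by
  have h0 : w ≠ 0 := by intro h; rw [h] at hw; simp at hw
  have hle : |w.arg| ≤ π / 2 := Complex.abs_arg_le_pi_div_two_iff.2 (by linarith)
  rcases lt_or_eq_of_le hle with h | h
  · exact h
  · exfalso
    have hc : Real.cos w.arg = w.re / ‖w‖ := Complex.cos_arg h0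
    have : Real.cos w.arg = 0 := by
      rcases abs_eq (le_of_lt (by positivity : (0:ℝ) < π / 2)) |>.1 h with h' | h'
      · rw [h']; exact Real.cos_pi_div_two
      · rw [h', Real.cos_neg]; exact Real.cos_pi_div_two
    rw [this] at hc
    rw [hw, div_one] at hc
    linarith

/-- Properties of ratios of nearby values of a circle-valued map. -/
lemma ratio_props {g : E → ℂ} (h1 : ∀ y, ‖g y‖ = 1) {N : ℕ} {y : E}
    (hf : Fine g N y) {s t : ℝ} (hs : s ∈ Icc (0:ℝ) 1) (ht : t ∈ Icc (0:ℝ) 1)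
    (hst : |s - t| ≤ 1 / (N : ℝ)) :
    ‖g (s • y) / g (t • y)‖ = 1 ∧ (1:ℝ)/2 ≤ (g (s • y) / g (t • y)).re ∧
      |(g (s • y) / g (t • y)).arg| < π / 2 := by
  have hne : ∀ z, g z ≠ 0 := fun z h => by have := h1 z; rw [h] at this; simp at this
  have habs : ‖g (s • y) / g (t • y)‖ = 1 := by
    rw [norm_div, h1, h1, div_one]
  have hclose : ‖g (s • y) / g (t • y) - 1‖ ≤ 1 / 2 := by
    have : g (s • y) / g (t • y) - 1 = (g (s • y) - g (t • y)) / g (t • y) := by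
      field_simp [hne]
    rw [this, norm_div, h1, div_one]
    exact hf s t hs ht hst
  have hre := re_ge_of_close hclose
  exact ⟨habs, hre, arg_abs_lt_pi_div_two habs hre⟩



lemma arg_ratio_congr (g : E → ℂ) (y : E) {r r' s s' : ℝ} (hr : r = r') (hs : s = s') :
    Complex.arg (g (r • y) / g (s • y)) = Complex.arg (g (r' • y) / g (s' • y)) := by
  rw [hr, hs]

lemma block_partial {g : E → ℂ} (h1 : ∀ y, ‖g y‖ = 1) {N m : ℕ}
    (hN : 1 ≤ N) (hm : 1 ≤ m) {y : E} (hf : Fine g N y) {k : ℕ} (hk : k < N) :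
    ∀ j, j ≤ m →
      Complex.arg (g ((((k:ℝ) * m + j) / ((N:ℝ) * m)) • y) / g (((k:ℝ) / N) • y))
        = ∑ i ∈ Finset.range j,
            Complex.arg (g ((((k:ℝ) * m + i + 1) / ((N:ℝ) * m)) • y) /
              g ((((k:ℝ) * m + i) / ((N:ℝ) * m)) • y)) := by
  have hne : ∀ z, g z ≠ 0 := fun z h => by have := h1 z; rw [h] at this; simp at this
  have hNr : (0:ℝ) < N := by exact_mod_cast Nat.lt_of_lt_of_le Nat.zero_lt_one hN
  have hmr : (0:ℝ) < m := by exact_mod_cast Nat.lt_of_lt_of_le Nat.zero_lt_one hm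
  have hkN : (k:ℝ) + 1 ≤ N := by exact_mod_cast hk
  set a : ℕ → ℝ := fun j => ((k:ℝ) * m + j) / ((N:ℝ) * m) with ha
  set c : ℝ := (k:ℝ) / N with hc
  have hc01 : c ∈ Icc (0:ℝ) 1 := by
    constructor
    · positivity
    · rw [hc, div_le_one hNr]; linarith
  have ha01 : ∀ j : ℕ, (j:ℝ) ≤ m → a j ∈ Icc (0:ℝ) 1 := by
    intro j hj
    constructor
    · have : (0:ℝ) ≤ (k:ℝ) * m + j := by positivity
      exact div_nonneg this (by positivity)
    · rw [ha, div_le_one (by positivity)]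
      nlinarith
  have hac : ∀ j : ℕ, (j:ℝ) ≤ m → |a j - c| ≤ 1 / N := by
    intro j hj
    have : a j - c = (j:ℝ) / ((N:ℝ) * m) := by
      rw [ha, hc]; field_simp; ring
    rw [this, _root_.abs_of_nonneg (by positivity)]
    rw [div_le_div_iff₀ (by positivity) hNr]
    nlinarith
  have haa : ∀ j : ℕ, a (j+1) - a j = 1 / ((N:ℝ) * m) := by
    intro j
    rw [ha]
    push_cast
    field_simp
    ring
  intro j hj
  induction j with
  | zero =>
      simp only [Finset.range_zero, Finset.sum_empty, Nat.cast_zero]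
      have h0 : ((k:ℝ) * m + 0) / ((N:ℝ) * m) = c := by
        rw [hc]; field_simp; ring
      rw [arg_ratio_congr g y h0 rfl, div_self (hne _), Complex.arg_one]
  | succ j ih =>
      have hjm : (j:ℝ) + 1 ≤ m := by exact_mod_cast hj
      have hjm' : (j:ℝ) ≤ m := by linarith
      have hihj : j ≤ m := by omega
      have ihh := ih (le_of_lt (Nat.lt_of_lt_of_le (Nat.lt_succ_self j) hj))
      -- the two factors
      have hPa : a j ∈ Icc (0:ℝ) 1 := ha01 j hjm'
      have hPa1 : a (j+1) ∈ Icc (0:ℝ) 1 := ha01 (j+1) (by push_cast; linarith)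
      have hP := ratio_props h1 hf hPa hc01 (hac j hjm')
      have hq := ratio_props h1 hf hPa1 hPa (by
        have := haa j
        have h' : |a (j+1) - a j| = 1 / ((N:ℝ) * m) := by
          rw [this, _root_.abs_of_nonneg (by positivity)]
        rw [h']
        rw [div_le_div_iff₀ (by positivity) hNr]
        nlinarith)
      have hprod : g (a (j+1) • y) / g (a j • y) * (g (a j • y) / g (c • y))
          = g (a (j+1) • y) / g (c • y) := by
        field_simp [hne]
      have hargmul : Complex.arg ((g (a (j+1) • y) / g (a j • y)) * (g (a j • y) / g (c • y)))
          = Complex.arg (g (a (j+1) • y) / g (a j • y))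
            + Complex.arg (g (a j • y) / g (c • y)) := by
        apply Complex.arg_mul
        · exact div_ne_zero (hne _) (hne _)
        · exact div_ne_zero (hne _) (hne _)
        · have b1 := abs_lt.1 hq.2.2
          have b2 := abs_lt.1 hP.2.2
          refine Set.mem_Ioc.mpr ⟨?_, ?_⟩ <;>
            nlinarith [b1.1, b1.2, b2.1, b2.2, Real.pi_pos]
      have goal1 : Complex.arg (g (a (j+1) • y) / g (c • y))
          = Complex.arg (g (a j • y) / g (c • y))
            + Complex.arg (g (a (j+1) • y) / g (a j • y)) := by
        rw [← hprod, hargmul]; ring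
      have e1 : ((k:ℝ) * m + (j+1:ℕ)) / ((N:ℝ) * m) = a (j+1) := by rw [ha]
      have e2 : ((k:ℝ) * m + j + 1) / ((N:ℝ) * m) = a (j+1) := by rw [ha]; push_cast; ring_nf
      have e3 : ((k:ℝ) * m + j) / ((N:ℝ) * m) = a j := by rw [ha]
      rw [Finset.sum_range_succ, ← ihh]
      rw [arg_ratio_congr g y e1 rfl, arg_ratio_congr g y e2 e3, goal1]

lemma sum_range_mul_block (F : ℕ → ℝ) (m : ℕ) :
    ∀ K : ℕ, ∑ i ∈ Finset.range (K * m), F i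
      = ∑ k ∈ Finset.range K, ∑ j ∈ Finset.range m, F (k * m + j) := by
  intro K
  induction K with
  | zero => simp
  | succ K ih =>
      rw [Nat.succ_mul, Finset.sum_range_succ, ← ih, Finset.sum_range_add]

lemma liftSum_mul {g : E → ℂ} (h1 : ∀ y, ‖g y‖ = 1) {N m : ℕ}
    (hN : 1 ≤ N) (hm : 1 ≤ m) {y : E} (hf : Fine g N y) :
    liftSum g (N * m) y = liftSum g N y := by
  unfold liftSum
  congr 1
  rw [sum_range_mul_block _ m N]
  refine Finset.sum_congr rfl fun k hk => ?_
  have hkN : k < N := Finset.mem_range.1 hk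
  have hblock := block_partial h1 hN hm hf hkN m le_rfl
  have hmr : (0:ℝ) < m := by exact_mod_cast Nat.lt_of_lt_of_le Nat.zero_lt_one hm
  have hNr : (0:ℝ) < N := by exact_mod_cast Nat.lt_of_lt_of_le Nat.zero_lt_one hN
  have eL : ((k:ℝ) * m + m) / ((N:ℝ) * m) = ((k:ℝ) + 1) / N := by
    field_simp
  have eR : ((k:ℝ) * m + 0) / ((N:ℝ) * m) = (k:ℝ) / N := by
    field_simp; ring
  have key : Complex.arg (g ((((k:ℝ) + 1) / N) • y) / g (((k:ℝ) / N) • y))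
      = ∑ j ∈ Finset.range m,
          Complex.arg (g ((((k:ℝ) * m + j + 1) / ((N:ℝ) * m)) • y)
            / g ((((k:ℝ) * m + j) / ((N:ℝ) * m)) • y)) :=
    (arg_ratio_congr g y eL rfl).symm.trans hblock
  rw [key]
  refine Finset.sum_congr rfl fun j _ => ?_
  refine arg_ratio_congr g y ?_ ?_ <;> push_cast <;> ring

lemma liftSum_eq {g : E → ℂ} (h1 : ∀ y, ‖g y‖ = 1) {N N' : ℕ}
    (hN : 1 ≤ N) (hN' : 1 ≤ N') {y : E} (hf : Fine g N y) (hf' : Fine g N' y) :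
    liftSum g N y = liftSum g N' y := by
  rw [← liftSum_mul h1 hN hN' hf, mul_comm, liftSum_mul h1 hN' hN hf']

lemma exists_fine [ProperSpace E] {g : E → ℂ} (hg : Continuous g) (y₀ : E) :
    ∃ N : ℕ, 1 ≤ N ∧ ∀ y ∈ Metric.ball y₀ 1, Fine g N y := by
  have hK : IsCompact ((Metric.closedBall y₀ 1) ×ˢ (Icc (0:ℝ) 1)) :=
    (isCompact_closedBall y₀ 1).prod isCompact_Icc
  have hΦ : Continuous fun p : E × ℝ => g (p.2 • p.1) :=
    hg.comp (continuous_snd.smul continuous_fst)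
  have huc := hK.uniformContinuousOn_of_continuous hΦ.continuousOn
  obtain ⟨δ, hδ, H⟩ := Metric.uniformContinuousOn_iff.1 huc (1/2) (by norm_num)
  obtain ⟨n, hn⟩ := exists_nat_one_div_lt hδ
  refine ⟨n + 1, by omega, fun y hy s t hs ht hst => ?_⟩
  have hyK : y ∈ Metric.closedBall y₀ 1 := Metric.ball_subset_closedBall hy
  have h1 : (y, s) ∈ (Metric.closedBall y₀ 1) ×ˢ (Icc (0:ℝ) 1) := ⟨hyK, hs⟩
  have h2 : (y, t) ∈ (Metric.closedBall y₀ 1) ×ˢ (Icc (0:ℝ) 1) := ⟨hyK, ht⟩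
  have hd : dist (y, s) (y, t) < δ := by
    rw [Prod.dist_eq]
    simp only [dist_self]
    rw [Real.dist_eq]
    calc max 0 |s - t| = |s - t| := max_eq_right (abs_nonneg _)
      _ ≤ 1 / ((n:ℝ) + 1) := by exact_mod_cast hst
      _ < δ := hn
  have := H (y, s) h1 (y, t) h2 hd
  rw [dist_eq_norm] at this
  calc ‖g (s • y) - g (t • y)‖ = ‖g (s • y) - g (t • y)‖ := rfl
    _ ≤ 1/2 := le_of_lt this

theorem exists_lift {E : Type*} [NormedAddCommGroup E] [NormedSpace ℝ E] [ProperSpace E]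
    (g : E → ℂ) (hg : Continuous g) (h1 : ∀ y, ‖g y‖ = 1) :
    ∃ h : E → ℝ, Continuous h ∧ ∀ y, g y = Complex.exp ((h y : ℂ) * Complex.I) := by
  have hne : ∀ z, g z ≠ 0 := fun z h => by have := h1 z; rw [h] at this; simp at this
  choose Nf hNf1 hNf2 using fun y₀ => exists_fine hg (g := g) y₀
  refine ⟨fun y => liftSum g (Nf y) y, ?_, ?_⟩
  · rw [continuous_iff_continuousAt]
    intro y₀
    have hfiney : ∀ y ∈ Metric.ball y₀ 1, Fine g (Nf y₀) y := hNf2 y₀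
    have hy₀self : ∀ y : E, Fine g (Nf y) y := fun y =>
      hNf2 y y (Metric.mem_ball_self one_pos)
    have heq : ∀ y ∈ Metric.ball y₀ 1,
        liftSum g (Nf y) y = liftSum g (Nf y₀) y := fun y hy =>
      liftSum_eq h1 (hNf1 y) (hNf1 y₀) (hy₀self y) (hfiney y hy)
    have hev : (fun y => liftSum g (Nf y) y) =ᶠ[nhds y₀] fun y => liftSum g (Nf y₀) y := by
      filter_upwards [Metric.ball_mem_nhds y₀ one_pos] with y hy using heq y hy
    refine ContinuousAt.congr ?_ hev.symm
    -- continuity of y ↦ liftSum g N y at y₀, where N = Nf y₀ is fine near y₀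
    set N := Nf y₀ with hNdef
    have hN1 : 1 ≤ N := hNf1 y₀
    have hNr : (0:ℝ) < N := by exact_mod_cast Nat.lt_of_lt_of_le Nat.zero_lt_one hN1
    unfold liftSum
    refine ContinuousAt.add continuousAt_const ?_
    refine tendsto_finset_sum _ fun k hk => ?_
    have hk01 : ((k:ℝ)) / N ∈ Icc (0:ℝ) 1 := by
      have : (k:ℝ) + 1 ≤ N := by exact_mod_cast Finset.mem_range.1 hk
      constructor
      · positivity
      · rw [div_le_one hNr]; linarith
    have hk101 : ((k:ℝ) + 1) / N ∈ Icc (0:ℝ) 1 := by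
      have : (k:ℝ) + 1 ≤ N := by exact_mod_cast Finset.mem_range.1 hk
      constructor
      · positivity
      · rw [div_le_one hNr]; linarith
    have hstep : |((k:ℝ) + 1) / N - (k:ℝ) / N| ≤ 1 / N := by
      have : ((k:ℝ) + 1) / N - (k:ℝ) / N = 1 / N := by field_simp; ring
      rw [this, _root_.abs_of_nonneg (by positivity)]
    have hratio := ratio_props h1 (hy₀self y₀) hk101 hk01 hstep
    have hcont : ContinuousAt (fun y : E =>
        g ((((k:ℝ) + 1) / N) • y) / g (((k:ℝ) / N) • y)) y₀ := by
      refine ContinuousAt.div ?_ ?_ (hne _)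
      · exact (hg.comp (continuous_const_smul _)).continuousAt
      · exact (hg.comp (continuous_const_smul _)).continuousAt
    refine (Complex.continuousAt_arg ?_).comp hcont
    exact Or.inl (by linarith [hratio.2.1])
  · intro y
    exact (exp_liftSum g h1 (hNf1 y) y).symm

lemma eq_on_preconnected_integer {X : Type*} [TopologicalSpace X] {s : Set X}
    (hs : IsPreconnected s) {q : X → ℝ} (hq : ContinuousOn q s)
    (hz : ∀ y ∈ s, ∃ n : ℤ, q y = n) {a b : X} (ha : a ∈ s) (hb : b ∈ s) :
    q a = q b := by
  by_contra hab
  wlog hlt : q a < q b generalizing a b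
  · exact this hb ha (fun h => hab h.symm)
      (lt_of_le_of_ne (not_lt.1 hlt) (fun h => hab h.symm))
  have himg : IsPreconnected (q '' s) := hs.image q hq
  have hoc : OrdConnected (q '' s) := himg.ordConnected
  obtain ⟨na, hna⟩ := hz a ha
  obtain ⟨nb, hnb⟩ := hz b hb
  have hnab : na < nb := by
    have : (na:ℝ) < nb := by rw [← hna, ← hnb]; exact hlt
    exact_mod_cast this
  have hmem : (na:ℝ) + 1/2 ∈ Icc (q a) (q b) := by
    constructor
    · rw [hna]; linarith
    · rw [hnb]
      have : (na:ℝ) + 1 ≤ nb := by exact_mod_cast hnab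
      linarith
  have : (na:ℝ) + 1/2 ∈ q '' s :=
    hoc.out (mem_image_of_mem q ha) (mem_image_of_mem q hb) hmem
  obtain ⟨y, hy, hqy⟩ := this
  obtain ⟨k, hk⟩ := hz y hy
  rw [hk] at hqy
  have : (2*k : ℤ) = (2*na + 1 : ℤ) := by
    have : ((2*k : ℤ) : ℝ) = ((2*na + 1 : ℤ) : ℝ) := by push_cast; linarith
    exact_mod_cast this
  omega

theorem unicoherence_aux {X : Type*} [TopologicalSpace X] [NormalSpace X]
    (hlift : ∀ g : X → ℂ, Continuous g → (∀ y, ‖g y‖ = 1) →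
      ∃ h : X → ℝ, Continuous h ∧ ∀ y, g y = Complex.exp ((h y : ℂ) * Complex.I))
    {C₁ C₂ : Set X} (h₁c : IsClosed C₁) (h₂c : IsClosed C₂)
    (h₁ : IsPreconnected C₁) (h₂ : IsPreconnected C₂) (hU : C₁ ∪ C₂ = univ) :
    IsPreconnected (C₁ ∩ C₂) := by
  classical
  by_contra hnc
  have hCc : IsClosed (C₁ ∩ C₂) := h₁c.inter h₂c
  rw [isPreconnected_iff_subset_of_fully_disjoint_closed hCc] at hnc
  push_neg at hnc
  obtain ⟨u, v, hu, hv, hsub, hdisj, hnu, hnv⟩ := hnc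
  set F₁ := (C₁ ∩ C₂) ∩ u with hF₁def
  set F₂ := (C₁ ∩ C₂) ∩ v with hF₂def
  have hF₁c : IsClosed F₁ := hCc.inter hu
  have hF₂c : IsClosed F₂ := hCc.inter hv
  have hF₁F₂ : Disjoint F₁ F₂ :=
    hdisj.mono inter_subset_right inter_subset_right
  have hunion : ∀ p ∈ C₁ ∩ C₂, p ∈ F₁ ∨ p ∈ F₂ := by
    intro p hp
    rcases hsub hp with h | h
    · exact Or.inl ⟨hp, h⟩
    · exact Or.inr ⟨hp, h⟩
  have hF₁ne : F₁.Nonempty := by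
    obtain ⟨p, hp, hpv⟩ := not_subset.1 hnv
    rcases hsub hp with h | h
    · exact ⟨p, hp, h⟩
    · exact absurd h hpv
  have hF₂ne : F₂.Nonempty := by
    obtain ⟨p, hp, hpu⟩ := not_subset.1 hnu
    rcases hsub hp with h | h
    · exact absurd h hpu
    · exact ⟨p, hp, h⟩
  obtain ⟨f, hf0, hf1, hf01⟩ := exists_continuous_zero_one_of_isClosed hF₁c hF₂c hF₁F₂
  set g : X → ℂ := fun y =>
    if y ∈ C₁ then Complex.exp ((π * f y : ℝ) * Complex.I)
    else Complex.exp ((-(π * f y) : ℝ) * Complex.I) with hgdef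
  have hC₁compl : C₁ᶜ ⊆ C₂ := by
    intro p hp
    rcases (by rw [hU]; trivial : p ∈ C₁ ∪ C₂) with h | h
    · exact absurd h hp
    · exact h
  have hgcont : Continuous g := by
    apply continuous_if
    · intro a hafr
      have hafr' : a ∈ frontier C₁ := hafr
      have haC₁ : a ∈ C₁ := h₁c.frontier_subset hafr'
      have haC₂ : a ∈ C₂ := by
        rw [frontier_eq_closure_inter_closure] at hafr'
        exact (h₂c.closure_subset_iff.2 hC₁compl) hafr'.2
      rcases hunion a ⟨haC₁, haC₂⟩ with h | h
      · have : f a = 0 := hf0 h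
        rw [this]
        norm_num
      · have : f a = 1 := hf1 h
        rw [this]
        norm_num
    · exact ((Complex.continuous_ofReal.comp (continuous_const.mul f.continuous)).mul
        continuous_const).cexp.continuousOn
    · exact ((Complex.continuous_ofReal.comp ((continuous_const.mul f.continuous).neg)).mul
        continuous_const).cexp.continuousOn
  have habs : ∀ y, ‖g y‖ = 1 := by
    intro y
    rw [hgdef]
    by_cases hy : y ∈ C₁ <;> simp [hy, Complex.norm_exp]
  obtain ⟨h, hhc, hgh⟩ := hlift g hgcont habs
  -- on C₁ : h y - π * f y ∈ 2πℤ
  have exp_eq : ∀ r r' : ℝ, Complex.exp ((r:ℂ) * Complex.I) = Complex.exp ((r':ℂ) * Complex.I)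
      → ∃ nn : ℤ, r - r' = nn * (2 * π) := by
    intro r r' hrr
    have : Complex.exp (((r - r' : ℝ) : ℂ) * Complex.I) = 1 := by
      push_cast
      rw [sub_mul, Complex.exp_sub, hrr, div_self (Complex.exp_ne_zero _)]
    obtain ⟨nn, hnn⟩ := Complex.exp_eq_one_iff.1 this
    refine ⟨nn, ?_⟩
    have hI : ((r - r' : ℝ) : ℂ) = (nn:ℂ) * (2 * (π:ℂ)) := by
      have := hnn
      rw [show (nn:ℂ) * (2 * (π:ℂ) * Complex.I) = ((nn:ℂ) * (2 * (π:ℂ))) * Complex.I by ring]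
        at this
      exact mul_right_cancel₀ Complex.I_ne_zero this
    have : ((r - r' : ℝ) : ℂ) = (((nn : ℝ) * (2 * π) : ℝ) : ℂ) := by
      rw [hI]; push_cast; ring
    exact_mod_cast this
  have key₁ : ∀ y ∈ C₁, ∃ nn : ℤ, (h y - π * f y) / (2 * π) = nn := by
    intro y hy
    have : g y = Complex.exp ((π * f y : ℝ) * Complex.I) := by rw [hgdef]; simp [hy]
    obtain ⟨nn, hnn⟩ := exp_eq (h y) (π * f y) (by rw [← this, ← hgh y])
    refine ⟨nn, ?_⟩
    rw [hnn]
    field_simp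
  have key₂ : ∀ y ∈ C₂, ∃ nn : ℤ, (h y + π * f y) / (2 * π) = nn := by
    intro y hy
    by_cases hy1 : y ∈ C₁
    · -- y ∈ C₁ ∩ C₂ : f y ∈ {0, 1}
      rcases hunion y ⟨hy1, hy⟩ with hmem | hmem
      · have hf : f y = 0 := hf0 hmem
        obtain ⟨nn, hnn⟩ := key₁ y hy1
        refine ⟨nn, ?_⟩
        rw [hf] at hnn ⊢
        simpa using hnn
      · have hf : f y = 1 := hf1 hmem
        obtain ⟨nn, hnn⟩ := key₁ y hy1
        refine ⟨nn + 1, ?_⟩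
        rw [hf] at hnn ⊢
        have hπ : (2:ℝ) * π ≠ 0 := by positivity
        field_simp at hnn ⊢
        push_cast
        linarith
    · have : g y = Complex.exp ((-(π * f y) : ℝ) * Complex.I) := by rw [hgdef]; simp [hy1]
      obtain ⟨nn, hnn⟩ := exp_eq (h y) (-(π * f y)) (by rw [← this, ← hgh y])
      refine ⟨nn, ?_⟩
      have : h y + π * f y = nn * (2 * π) := by linarith [hnn]
      rw [this]
      field_simp
  have hπ : (0:ℝ) < π := Real.pi_pos
  -- q₁ constant on C₁, q₂ constant on C₂
  set q₁ : X → ℝ := fun y => (h y - π * f y) / (2 * π) with hq₁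
  set q₂ : X → ℝ := fun y => (h y + π * f y) / (2 * π) with hq₂
  have hq₁c : ContinuousOn q₁ C₁ :=
    ((hhc.sub (continuous_const.mul f.continuous)).div_const _).continuousOn
  have hq₂c : ContinuousOn q₂ C₂ :=
    ((hhc.add (continuous_const.mul f.continuous)).div_const _).continuousOn
  obtain ⟨a, haF₁⟩ := hF₁ne
  obtain ⟨b, hbF₂⟩ := hF₂ne
  have haC : a ∈ C₁ ∩ C₂ := haF₁.1
  have hbC : b ∈ C₁ ∩ C₂ := hbF₂.1
  have e₁ : q₁ a = q₁ b := eq_on_preconnected_integer h₁ hq₁c key₁ haC.1 hbC.1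
  have e₂ : q₂ a = q₂ b := eq_on_preconnected_integer h₂ hq₂c key₂ haC.2 hbC.2
  have hfa : f a = 0 := hf0 haF₁
  have hfb : f b = 1 := hf1 hbF₂
  rw [hq₁] at e₁
  rw [hq₂] at e₂
  simp only [hfa, hfb] at e₁ e₂
  have h2π : (2:ℝ) * π ≠ 0 := by positivity
  field_simp at e₁ e₂
  linarith

end ZnAux

end LiftingTheory

namespace ZnAuxC

variable {n : ℕ}

/-- The complement of a closed ball in `ℝⁿ`, `n ≥ 2`, is connected. -/
lemma ext_connected (hn : 2 ≤ n) (R : ℝ) (hR : 0 ≤ R) :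
    IsConnected ((Metric.closedBall (0 : Fin n → ℝ) R)ᶜ) := by
  have hrank : 1 < Module.rank ℝ (Fin n → ℝ) := by
    rw [rank_fin_fun]
    exact_mod_cast hn
  have hne : Nonempty (Fin n) := ⟨⟨0, by omega⟩⟩
  -- base point on the sphere of radius R + 1
  have hSconn : IsConnected (Metric.sphere (0 : Fin n → ℝ) (R + 1)) :=
    isConnected_sphere hrank 0 (by linarith)
  set p₀ : Fin n → ℝ := fun _ => R + 1 with hp₀
  have hpS : p₀ ∈ Metric.sphere (0 : Fin n → ℝ) (R + 1) := by
    simp only [Metric.mem_sphere, dist_zero_right, hp₀]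
    rw [pi_norm_const]
    rw [Real.norm_eq_abs, abs_of_nonneg (by linarith)]
  have hmemExt : ∀ v : Fin n → ℝ, v ∈ (Metric.closedBall (0 : Fin n → ℝ) R)ᶜ ↔ R < ‖v‖ := by
    intro v
    simp [Metric.mem_closedBall, dist_zero_right, not_le]
  have hSExt : Metric.sphere (0 : Fin n → ℝ) (R + 1) ⊆ (Metric.closedBall (0 : Fin n → ℝ) R)ᶜ := by
    intro v hv
    rw [hmemExt]
    rw [Metric.mem_sphere, dist_zero_right] at hv
    rw [hv]; linarith
  have hrayconn : ∀ v : Fin n → ℝ, IsPreconnected ((fun c : ℝ => c • v) '' uIcc 1 ((R + 1) / ‖v‖)) :=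
    fun v => isPreconnected_uIcc.image _ (continuous_id.smul continuous_const).continuousOn
  have hkey : ∀ v : Fin n → ℝ, R < ‖v‖ → ∀ c : ℝ, c ∈ uIcc 1 ((R + 1) / ‖v‖) →
      0 < c ∧ R < ‖c • v‖ := by
    intro v hv c hc
    have hv0 : 0 < ‖v‖ := lt_of_le_of_lt hR hv
    have hq : 0 < (R + 1) / ‖v‖ := by positivity
    have hcpos : 0 < c := by
      rcases Set.mem_uIcc.1 hc with ⟨h1, _⟩ | ⟨h1, _⟩
      · linarith
      · linarith
    refine ⟨hcpos, ?_⟩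
    rw [norm_smul, Real.norm_eq_abs, abs_of_pos hcpos]
    rcases Set.mem_uIcc.1 hc with ⟨h1, _⟩ | ⟨h1, _⟩
    · nlinarith
    · have : (R + 1) / ‖v‖ * ‖v‖ = R + 1 := div_mul_cancel₀ _ (ne_of_gt hv0)
      nlinarith
  -- each point of Ext is in a connected subset of Ext containing the sphere
  refine ⟨⟨p₀, hSExt hpS⟩, ?_⟩
  have hcover : (Metric.closedBall (0 : Fin n → ℝ) R)ᶜ
      = ⋃₀ ((fun v => ((fun c : ℝ => c • v) '' uIcc 1 ((R + 1) / ‖v‖))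
          ∪ Metric.sphere (0 : Fin n → ℝ) (R + 1)) ''
            ((Metric.closedBall (0 : Fin n → ℝ) R)ᶜ)) := by
    apply Subset.antisymm
    · intro v hv
      refine ⟨_, mem_image_of_mem _ hv, Or.inl ⟨1, left_mem_uIcc, one_smul ℝ v⟩⟩
    · rintro q ⟨_, ⟨v, hv, rfl⟩, hq⟩
      rcases hq with ⟨c, hc, rfl⟩ | hq
      · rw [hmemExt]
        exact (hkey v ((hmemExt v).1 hv) c hc).2
      · exact hSExt hq
  rw [hcover]
  apply isPreconnected_sUnion p₀
  · rintro _ ⟨v, hv, rfl⟩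
    exact Or.inr hpS
  · rintro _ ⟨v, hv, rfl⟩
    have hvE : R < ‖v‖ := (hmemExt v).1 hv
    have hv0 : 0 < ‖v‖ := lt_of_le_of_lt hR hvE
    apply IsPreconnected.union (((R + 1) / ‖v‖) • v)
    · exact ⟨(R + 1) / ‖v‖, right_mem_uIcc, rfl⟩
    · rw [Metric.mem_sphere, dist_zero_right, norm_smul, Real.norm_eq_abs,
        abs_of_pos (by positivity), div_mul_cancel₀ _ (ne_of_gt hv0)]
    · exact hrayconn v
    · exact hSconn.isPreconnected

lemma open_inter_closure_empty {X : Type*} [TopologicalSpace X] {O s : Set X}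
    (hO : IsOpen O) (h : O ∩ s = ∅) : O ∩ closure s = ∅ := by
  have hs : s ⊆ Oᶜ := fun x hx hxO => by
    have : x ∈ O ∩ s := ⟨hxO, hx⟩
    rw [h] at this; exact this
  have : closure s ⊆ Oᶜ := hO.isClosed_compl.closure_subset_iff.2 hs
  ext x
  simp only [mem_inter_iff, mem_empty_iff_false, iff_false, not_and]
  exact fun hxO hxc => this hxc hxO

section Tiles

variable {n : ℕ} {M : Set (Fin n → ℝ)}

/-- interior of a nonzero translate is disjoint from `M` itself. -/
lemma int_translate_disjoint (hM : IsZnTile M) {z : Fin n → ℤ} (hz : z ≠ 0) :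
    interior ((fun x => x + intVecToReal z) '' M) ∩ M = ∅ := by
  have h0 : (fun x => x + intVecToReal (0 : Fin n → ℤ)) '' M = M := by
    have : intVecToReal (0 : Fin n → ℤ) = 0 := by
      funext i; simp [intVecToReal]
    simp [this]
  have hd : Disjoint (interior ((fun x => x + intVecToReal z) '' M))
      (interior ((fun x => x + intVecToReal (0 : Fin n → ℤ)) '' M)) := hM.2.2.2.2 hz
  rw [h0] at hd
  have hdis : interior ((fun x => x + intVecToReal z) '' M) ∩ interior M = ∅ :=
    disjoint_iff_inter_eq_empty.1 hd
  have := open_inter_closure_empty isOpen_interior hdis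
  rw [← hM.2.1] at this
  exact this

lemma tile_closed (hM : IsZnTile M) (z : Fin n → ℤ) :
    IsClosed ((fun x => x + intVecToReal z) '' M) :=
  (hM.1.image (continuous_id.add continuous_const)).isClosed

lemma tile_via_homeo (z : Fin n → ℤ) :
    (fun x => x + intVecToReal z) '' M = (Homeomorph.addRight (intVecToReal z)) '' M := rfl

lemma tile_volume_frontier (hM : IsZnTile M) (z : Fin n → ℤ) :
    MeasureTheory.volume (frontier ((fun x => x + intVecToReal z) '' M)) = 0 := by
  rw [tile_via_homeo, ← Homeomorph.image_frontier]
  have himg : (Homeomorph.addRight (intVecToReal z)) '' frontier M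
      = (fun x => x + (-(intVecToReal z))) ⁻¹' (frontier M) := by
    ext x
    simp only [mem_image, mem_preimage]
    constructor
    · rintro ⟨y, hy, rfl⟩
      simpa [Homeomorph.addRight] using hy
    · intro hx
      exact ⟨x + -intVecToReal z, hx, by simp [Homeomorph.addRight]⟩
  rw [himg]
  have : (fun x : Fin n → ℝ => x + (-(intVecToReal z)))
      = (fun x : Fin n → ℝ => (-(intVecToReal z)) + x) := by
    funext x; exact add_comm _ _
  rw [this, MeasureTheory.measure_preimage_add]
  exact hM.2.2.1

lemma tiles_cover (hM : IsZnTile M) (p : Fin n → ℝ) :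
    ∃ z : Fin n → ℤ, p ∈ (fun x => x + intVecToReal z) '' M := by
  have : p ∈ ⋃ z : Fin n → ℤ, (fun x => x + intVecToReal z) '' M := by
    rw [hM.2.2.2.1]; trivial
  exact mem_iUnion.1 this

theorem compl_tile_connected (hn : 2 ≤ n) (hM : IsZnTile M)
    (hint : IsConnected (interior M)) : IsConnected Mᶜ := by
  have hMclosed : IsClosed M := hM.1.isClosed
  obtain ⟨R₀, hR₀⟩ := hM.1.isBounded.subset_closedBall (0 : Fin n → ℝ)
  set R := max R₀ 1 with hRdef
  have hR0 : (0:ℝ) < R := lt_of_lt_of_le one_pos (le_max_right _ _)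
  have hMR : M ⊆ Metric.closedBall 0 R :=
    hR₀.trans (Metric.closedBall_subset_closedBall (le_max_left _ _))
  set Ext := (Metric.closedBall (0 : Fin n → ℝ) R)ᶜ with hExtdef
  have hExtconn : IsConnected Ext := ext_connected hn R hR0.le
  have hExtopen : IsOpen Ext := Metric.isClosed_closedBall.isOpen_compl
  set V := Mᶜ with hVdef
  have hVopen : IsOpen V := hMclosed.isOpen_compl
  have hExtV : Ext ⊆ V := fun q hq hqM => hq (hMR hqM)
  obtain ⟨e₀, he₀⟩ := hExtconn.nonempty
  set Winf := connectedComponentIn V e₀ with hWinf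
  have hExtW : Ext ⊆ Winf :=
    hExtconn.isPreconnected.subset_connectedComponentIn he₀ hExtV
  suffices hVW : V ⊆ Winf by
    have hVeq : V = Winf := hVW.antisymm (connectedComponentIn_subset _ _)
    exact ⟨⟨e₀, hExtV he₀⟩, hVeq ▸ isPreconnected_connectedComponentIn⟩
  intro p hp
  by_contra hpW
  set W := connectedComponentIn V p with hWdef
  have hdisj : ∀ q, q ∈ W → q ∉ Winf := by
    intro q hqW hqWinf
    apply hpW
    have h1 : connectedComponentIn V q = connectedComponentIn V e₀ :=
      (connectedComponentIn_eq hqWinf).symm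
    have h2 : connectedComponentIn V q = connectedComponentIn V p :=
      (connectedComponentIn_eq hqW).symm
    show p ∈ connectedComponentIn V e₀
    rw [← h1, h2]
    exact mem_connectedComponentIn hp
  -- find a tile interior inside W
  have hWopen : IsOpen W := hVopen.connectedComponentIn
  have hWne : W.Nonempty := ⟨p, mem_connectedComponentIn hp⟩
  have hpos : 0 < MeasureTheory.volume W := hWopen.measure_pos _ hWne
  have hBnull : MeasureTheory.volume
      (⋃ z : Fin n → ℤ, frontier ((fun x => x + intVecToReal z) '' M)) = 0 :=
    MeasureTheory.measure_iUnion_null fun z => tile_volume_frontier hM z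
  have hnsub : ¬ W ⊆ ⋃ z : Fin n → ℤ, frontier ((fun x => x + intVecToReal z) '' M) := by
    intro hsub
    have hle : MeasureTheory.volume W ≤ MeasureTheory.volume
        (⋃ z : Fin n → ℤ, frontier ((fun x => x + intVecToReal z) '' M)) :=
      MeasureTheory.measure_mono hsub
    rw [hBnull] at hle
    exact absurd (le_antisymm hle zero_le) (ne_of_gt hpos)
  obtain ⟨p', hp'W, hp'B⟩ := not_subset.1 hnsub
  obtain ⟨z₀, hz₀⟩ := tiles_cover hM p'
  have hp'int : p' ∈ interior ((fun x => x + intVecToReal z₀) '' M) := by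
    by_contra hni
    apply hp'B
    apply mem_iUnion.2 ⟨z₀, ?_⟩
    rw [(tile_closed hM z₀).frontier_eq]
    exact ⟨hz₀, hni⟩
  have hz₀0 : z₀ ≠ 0 := by
    rintro rfl
    have h0 : (fun x => x + intVecToReal (0 : Fin n → ℤ)) '' M = M := by
      have : intVecToReal (0 : Fin n → ℤ) = 0 := by funext i; simp [intVecToReal]
      simp [this]
    rw [h0] at hp'int
    exact (connectedComponentIn_subset V p hp'W) (interior_subset hp'int)
  have hintconn : IsConnected (interior ((fun x => x + intVecToReal z₀) '' M)) := by
    rw [tile_via_homeo, ← Homeomorph.image_interior]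
    exact hint.image _ (Homeomorph.continuous _).continuousOn
  have hintV : interior ((fun x => x + intVecToReal z₀) '' M) ⊆ V := by
    intro q hq hqM
    have : q ∈ interior ((fun x => x + intVecToReal z₀) '' M) ∩ M := ⟨hq, hqM⟩
    rw [int_translate_disjoint hM hz₀0] at this
    exact this
  have hintW : interior ((fun x => x + intVecToReal z₀) '' M) ⊆ W := by
    have h1 := hintconn.isPreconnected.subset_connectedComponentIn hp'int hintV
    rwa [← connectedComponentIn_eq hp'W] at h1
  set v₀ := intVecToReal z₀ with hv₀def
  have hv₀ : v₀ ≠ 0 := by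
    intro h
    apply hz₀0
    funext i
    have : (z₀ i : ℝ) = 0 := congrFun h i
    exact_mod_cast this
  have hv₀norm : 0 < ‖v₀‖ := norm_pos_iff.2 hv₀
  -- the translation step
  have step : ∀ c : Fin n → ℝ, ((fun x => x + c) '' M) ⊆ Metric.closedBall 0 R →
      ((fun x => x + (c + v₀)) '' M) ⊆ Metric.closedBall 0 R := by
    intro c hc
    set ec : (Fin n → ℝ) ≃ₜ (Fin n → ℝ) := Homeomorph.addRight c with hec
    have hVc : IsOpen (ec '' V) := (Homeomorph.isOpenMap ec) V hVopen
    have hWc : ec '' W = connectedComponentIn (ec '' V) (ec p) :=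
      ec.image_connectedComponentIn hp
    have hMc : ec '' M = (fun x => x + c) '' M := rfl
    have hVcM : ec '' V = ((fun x => x + c) '' M)ᶜ := by
      rw [← hMc]
      exact (Homeomorph.image_compl ec M)
    have hExtVc : Ext ⊆ ec '' V := by
      rw [hVcM]
      intro q hq hqM
      exact hq (hc hqM)
    -- interior of (M + (c + v₀)) sits inside ec '' W
    have hcomp : ec '' ((fun x => x + v₀) '' M) = (fun x => x + (c + v₀)) '' M := by
      rw [← image_comp]
      have hfun : (⇑ec ∘ fun x => x + v₀) = (fun x : Fin n → ℝ => x + (c + v₀)) := by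
        funext x
        show x + v₀ + c = x + (c + v₀)
        ring
      rw [hfun]
    have hintWc : interior ((fun x => x + (c + v₀)) '' M) ⊆ ec '' W := by
      rw [← hcomp, ← Homeomorph.image_interior]
      exact image_mono hintW
    -- Ext does not meet the closure of ec '' W
    have hExtclos : Ext ∩ closure (ec '' W) = ∅ := by
      by_contra hne
      obtain ⟨e, heExt, heclos⟩ := nonempty_iff_ne_empty.2 hne
      obtain ⟨q, hqExt, hqWc⟩ :=
        mem_closure_iff.1 heclos Ext hExtopen heExt
      have hqVc : q ∈ ec '' V := hExtVc hqExt
      have hExtsub : Ext ⊆ connectedComponentIn (ec '' V) q :=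
        hExtconn.isPreconnected.subset_connectedComponentIn hqExt hExtVc
      have hcomp_eq : connectedComponentIn (ec '' V) q = ec '' W := by
        rw [hWc]
        exact (connectedComponentIn_eq (by rw [← hWc]; exact hqWc)).symm
      rw [hcomp_eq] at hExtsub
      -- a far away point
      set y₀ : Fin n → ℝ := fun _ => R + 1 + ‖c‖ with hy₀
      have hy₀norm : ‖y₀‖ = R + 1 + ‖c‖ := by
        have hne : Nonempty (Fin n) := ⟨⟨0, by omega⟩⟩
        rw [hy₀, pi_norm_const, Real.norm_eq_abs, abs_of_nonneg (by positivity)]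
      have hy₀Ext : y₀ ∈ Ext := by
        simp only [hExtdef, mem_compl_iff, Metric.mem_closedBall, dist_zero_right, not_le]
        rw [hy₀norm]
        linarith [norm_nonneg c]
      have hy₀W : y₀ ∈ ec '' W := hExtsub hy₀Ext
      obtain ⟨w, hwW, hwy⟩ := hy₀W
      have hwval : w = y₀ - c := by
        have : w + c = y₀ := hwy
        rw [← this]; ring
      have hwExt : w ∈ Ext := by
        simp only [hExtdef, mem_compl_iff, Metric.mem_closedBall, dist_zero_right, not_le]
        rw [hwval]
        have h1 : ‖y₀‖ - ‖c‖ ≤ ‖y₀ - c‖ := norm_sub_norm_le y₀ c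
        rw [hy₀norm] at h1
        linarith
      exact hdisj w hwW (hExtW hwExt)
    -- conclude
    have hMceq : (fun x => x + (c + v₀)) '' M
        = closure (interior ((fun x => x + (c + v₀)) '' M)) := by
      have e : (fun x => x + (c + v₀)) '' M = (Homeomorph.addRight (c + v₀)) '' M := rfl
      rw [e]
      nth_rewrite 1 [hM.2.1]
      rw [Homeomorph.image_closure, Homeomorph.image_interior]
    intro q hq
    by_contra hqball
    have hqExt : q ∈ Ext := hqball
    have : q ∈ closure (ec '' W) := by
      rw [hMceq] at hq
      exact closure_mono hintWc hq
    have : q ∈ Ext ∩ closure (ec '' W) := ⟨hqExt, this⟩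
    rw [hExtclos] at this
    exact this
  -- iterate the step
  have main : ∀ k : ℕ, ((fun x => x + (((k:ℝ) + 1) • v₀)) '' M) ⊆ Metric.closedBall 0 R := by
    intro k
    induction k with
    | zero =>
        have h0 : ((fun x => x + ((0:Fin n → ℝ) + v₀)) '' M) ⊆ Metric.closedBall 0 R := by
          apply step 0
          simpa using hMR
        have heq : (fun x : Fin n → ℝ => x + (((0:ℕ):ℝ) + 1) • v₀)
            = (fun x : Fin n → ℝ => x + ((0:Fin n → ℝ) + v₀)) := by
          funext x
          norm_num
        rw [heq]
        exact h0
    | succ k ih =>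
        have h1 := step (((k:ℝ) + 1) • v₀) ih
        have : (((k:ℕ)+1 : ℕ):ℝ) + 1 = ((k:ℝ) + 1) + 1 := by push_cast; ring
        rw [show ((((k:ℕ)+1 : ℕ):ℝ) + 1) • v₀ = ((k:ℝ) + 1) • v₀ + v₀ by
          rw [this, add_smul, one_smul]]
        exact h1
  -- contradiction: far translates cannot stay in the ball
  obtain ⟨m₀, hm₀⟩ := hint.nonempty
  have hm₀M : m₀ ∈ M := interior_subset hm₀
  obtain ⟨k, hk⟩ := exists_nat_gt ((R + ‖m₀‖) / ‖v₀‖)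
  have hmem := main k (mem_image_of_mem _ hm₀M)
  rw [Metric.mem_closedBall, dist_zero_right] at hmem
  have h2 : ‖(((k:ℝ) + 1) • v₀)‖ - ‖m₀‖ ≤ ‖m₀ + ((k:ℝ) + 1) • v₀‖ := by
    have h4 := norm_add_le (-m₀) (m₀ + ((k:ℝ) + 1) • v₀)
    rw [neg_add_cancel_left, norm_neg] at h4
    linarith
  rw [norm_smul, Real.norm_eq_abs, abs_of_pos (by positivity)] at h2
  have h3 : (R + ‖m₀‖) < k * ‖v₀‖ := by
    rw [div_lt_iff₀ hv₀norm] at hk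
    linarith
  nlinarith [norm_nonneg m₀]

end Tiles

end ZnAuxC


section Glue

open Set

namespace ZnGlue

variable {n : ℕ}

noncomputable def inv1 (x : Fin n → ℝ) : (Fin n → ℝ) → (Fin n → ℝ) :=
  fun y => (‖y - x‖ ^ 2)⁻¹ • (y - x)

noncomputable def inv2 (x : Fin n → ℝ) : (Fin n → ℝ) → (Fin n → ℝ) :=
  fun w => x + (‖w‖ ^ 2)⁻¹ • w

lemma norm_inv_sq_smul {v : Fin n → ℝ} (hv : v ≠ 0) : ‖(‖v‖ ^ 2)⁻¹ • v‖ = ‖v‖⁻¹ := by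
  have h : (0:ℝ) < ‖v‖ := norm_pos_iff.2 hv
  rw [norm_smul, Real.norm_eq_abs, abs_of_pos (by positivity)]
  field_simp

lemma inv1_norm (x : Fin n → ℝ) {y : Fin n → ℝ} (hy : y ≠ x) :
    ‖inv1 x y‖ = ‖y - x‖⁻¹ :=
  norm_inv_sq_smul (sub_ne_zero.2 hy)

lemma inv1_ne_zero (x : Fin n → ℝ) {y : Fin n → ℝ} (hy : y ≠ x) : inv1 x y ≠ 0 := by
  intro h
  have := inv1_norm x hy
  rw [h, norm_zero] at this
  have h2 : (0:ℝ) < ‖y - x‖ := norm_pos_iff.2 (sub_ne_zero.2 hy)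
  exact absurd this.symm (by positivity)

lemma inv2_inv1 (x : Fin n → ℝ) {y : Fin n → ℝ} (hy : y ≠ x) : inv2 x (inv1 x y) = y := by
  have hv : y - x ≠ 0 := sub_ne_zero.2 hy
  have h : (0:ℝ) < ‖y - x‖ := norm_pos_iff.2 hv
  unfold inv2 inv1
  rw [norm_inv_sq_smul hv, smul_smul]
  have : (((‖y - x‖⁻¹) ^ 2)⁻¹ * (‖y - x‖ ^ 2)⁻¹ : ℝ) = 1 := by
    field_simp
  rw [this, one_smul, add_sub_cancel]

lemma inv2_ne (x : Fin n → ℝ) {w : Fin n → ℝ} (hw : w ≠ 0) : inv2 x w ≠ x := by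
  unfold inv2
  intro h
  have h0 : (0:ℝ) < ‖w‖ := norm_pos_iff.2 hw
  have h1 : (‖w‖ ^ 2)⁻¹ • w = 0 := by
    have h2 : x + (‖w‖ ^ 2)⁻¹ • w = x + 0 := by rw [add_zero]; exact h
    exact add_left_cancel h2
  have h3 := norm_inv_sq_smul hw
  rw [h1, norm_zero] at h3
  exact absurd h3.symm (by positivity)

lemma inv1_inv2 (x : Fin n → ℝ) {w : Fin n → ℝ} (hw : w ≠ 0) : inv1 x (inv2 x w) = w := by
  have h0 : (0:ℝ) < ‖w‖ := norm_pos_iff.2 hw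
  unfold inv1 inv2
  rw [add_sub_cancel_left, norm_inv_sq_smul hw, smul_smul]
  have : (((‖w‖⁻¹) ^ 2)⁻¹ * (‖w‖ ^ 2)⁻¹ : ℝ) = 1 := by field_simp
  rw [this, one_smul]

lemma inv1_continuousAt (x : Fin n → ℝ) {y : Fin n → ℝ} (hy : y ≠ x) :
    ContinuousAt (inv1 x) y := by
  have hv : y - x ≠ 0 := sub_ne_zero.2 hy
  have h : (0:ℝ) < ‖y - x‖ := norm_pos_iff.2 hv
  apply ContinuousAt.fun_smul
  · apply ContinuousAt.inv₀
    · exact (((continuous_id.sub continuous_const).norm).pow 2).continuousAt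
    · positivity
  · exact (continuous_id.sub continuous_const).continuousAt

lemma inv2_continuousAt (x : Fin n → ℝ) {w : Fin n → ℝ} (hw : w ≠ 0) :
    ContinuousAt (inv2 x) w := by
  have h0 : (0:ℝ) < ‖w‖ := norm_pos_iff.2 hw
  apply ContinuousAt.add continuousAt_const
  apply ContinuousAt.fun_smul
  · apply ContinuousAt.inv₀
    · exact ((continuous_id.norm).pow 2).continuousAt
    · positivity
  · exact continuousAt_id

lemma inv2_zero (x : Fin n → ℝ) : inv2 x 0 = x := by
  unfold inv2
  simp

end ZnGlue

end Glue

/-- for `n ≥ 2`, the boundary of a `ℤⁿ`-tile with connected interior has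
no separating point: `∂M \ {x}` is connected for every `x ∈ ∂M`. -/
theorem boundary_of_ZnTile_no_separating_point (n : ℕ) (hn : 2 ≤ n)
    (M : Set (Fin n → ℝ)) (hM : IsZnTile M)
    (hint : IsConnected (interior M)) :
    ∀ x ∈ frontier M, IsConnected (frontier M \ {x}) := by
  intro x hx
  classical
  have hMclosed : IsClosed M := hM.1.isClosed
  have hMcl : M = closure (interior M) := hM.2.1
  have hFsub : frontier M ⊆ M := hMclosed.frontier_subset
  have hxM : x ∈ M := hFsub hx
  have hxint : x ∉ interior M := hx.2
  have hrank : 1 < Module.rank ℝ (Fin n → ℝ) := by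
    rw [rank_fin_fun]; exact_mod_cast hn
  have hVconn : IsConnected Mᶜ := ZnAuxC.compl_tile_connected hn hM hint
  obtain ⟨q₀, hq₀⟩ := hint.nonempty
  have hq₀x : q₀ ≠ x := fun h => hxint (h ▸ hq₀)
  -- `∂M \ {x}` is nonempty
  have hFne : (frontier M \ {x}).Nonempty := by
    by_contra hne
    rw [not_nonempty_iff_eq_empty] at hne
    have hFsubx : frontier M ⊆ {x} := by
      intro q hq
      by_contra hqx
      have : q ∈ frontier M \ {x} := ⟨hq, hqx⟩
      rw [hne] at this
      exact this
    have hconn : IsPreconnected ({x}ᶜ : Set (Fin n → ℝ)) :=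
      ((Set.countable_singleton x).isPathConnected_compl_of_one_lt_rank
        hrank).isConnected.isPreconnected
    obtain ⟨e, he⟩ := hVconn.nonempty
    have hex : e ≠ x := fun h => he (h ▸ hxM)
    have hcover : ({x}ᶜ : Set (Fin n → ℝ)) ⊆ interior M ∪ Mᶜ := by
      intro q hq
      by_cases hqM : q ∈ M
      · left
        by_contra hqi
        have : q ∈ frontier M := by
          rw [hMclosed.frontier_eq]
          exact ⟨hqM, hqi⟩
        exact hq (hFsubx this)
      · exact Or.inr hqM
    have hres := hconn (interior M) Mᶜ isOpen_interior hMclosed.isOpen_compl hcover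
      ⟨q₀, by simpa using hq₀x, hq₀⟩ ⟨e, by simpa using hex, he⟩
    obtain ⟨q, _, hqi, hqc⟩ := hres
    exact hqc (interior_subset hqi)
  -- inversion at x
  obtain ⟨D₀, hD₀⟩ := hM.1.isBounded.subset_closedBall x
  set D := max D₀ 1 with hDdef
  have hD0 : (0:ℝ) < D := lt_of_lt_of_le one_pos (le_max_right _ _)
  have hMD : M ⊆ Metric.closedBall x D :=
    hD₀.trans (Metric.closedBall_subset_closedBall (le_max_left _ _))
  have hDinv : (0:ℝ) < D⁻¹ := by positivity
  -- norm bounds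
  have hnormM : ∀ y ∈ M, y ≠ x → D⁻¹ ≤ ‖ZnGlue.inv1 x y‖ := by
    intro y hy hyx
    rw [ZnGlue.inv1_norm x hyx]
    have h1 : ‖y - x‖ ≤ D := by
      have := hMD hy
      rwa [Metric.mem_closedBall, dist_eq_norm] at this
    have h2 : (0:ℝ) < ‖y - x‖ := norm_pos_iff.2 (sub_ne_zero.2 hyx)
    exact inv_anti₀ h2 h1
  set C₁ : Set (Fin n → ℝ) := {w | D⁻¹ ≤ ‖w‖ ∧ ZnGlue.inv2 x w ∈ M} with hC₁def
  set C₂ : Set (Fin n → ℝ) := {w | ZnGlue.inv2 x w ∉ interior M} with hC₂def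
  have hC₁ne0 : ∀ w ∈ C₁, w ≠ 0 := by
    intro w hw h0
    have h1 : D⁻¹ ≤ ‖w‖ := hw.1
    rw [h0, norm_zero] at h1
    exact absurd h1 (not_le.2 hDinv)
  -- C₁ is closed
  have hC₁closed : IsClosed C₁ := by
    have hSclosed : IsClosed {w : Fin n → ℝ | D⁻¹ ≤ ‖w‖} :=
      isClosed_le continuous_const continuous_norm
    have hcont : ContinuousOn (ZnGlue.inv2 x) {w : Fin n → ℝ | D⁻¹ ≤ ‖w‖} := by
      intro w hw
      have hw0 : w ≠ 0 := by
        intro h0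
        have h1 : D⁻¹ ≤ ‖w‖ := hw
        rw [h0, norm_zero] at h1
        exact absurd h1 (not_le.2 hDinv)
      exact (ZnGlue.inv2_continuousAt x hw0).continuousWithinAt
    have := hcont.preimage_isClosed_of_isClosed hSclosed hMclosed
    have heq : C₁ = {w : Fin n → ℝ | D⁻¹ ≤ ‖w‖} ∩ (ZnGlue.inv2 x) ⁻¹' M := by
      ext w
      simp only [hC₁def, mem_setOf_eq, mem_inter_iff, mem_preimage]
    rw [heq]
    exact this
  -- C₂ is closed
  have hC₂closed : IsClosed C₂ := by
    rw [← isOpen_compl_iff]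
    rw [isOpen_iff_mem_nhds]
    intro w hw
    simp only [hC₂def, mem_compl_iff, mem_setOf_eq, not_not] at hw
    have hw0 : w ≠ 0 := by
      intro h0
      rw [h0, ZnGlue.inv2_zero] at hw
      exact hxint hw
    have := (ZnGlue.inv2_continuousAt x hw0).preimage_mem_nhds
      (isOpen_interior.mem_nhds hw)
    apply Filter.mem_of_superset this
    intro q hq
    simp only [hC₂def, mem_compl_iff, mem_setOf_eq, not_not]
    exact hq
  -- the covering property
  have hunion : C₁ ∪ C₂ = univ := by
    ext w
    simp only [mem_union, hC₁def, hC₂def, mem_setOf_eq, mem_univ, iff_true]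
    by_cases h : ZnGlue.inv2 x w ∈ interior M
    · left
      have hw0 : w ≠ 0 := by
        intro h0
        rw [h0, ZnGlue.inv2_zero] at h
        exact hxint h
      refine ⟨?_, interior_subset h⟩
      have h1 : ‖ZnGlue.inv2 x w - x‖ ≤ D := by
        have := hMD (interior_subset h)
        rwa [Metric.mem_closedBall, dist_eq_norm] at this
      have h2 : ZnGlue.inv2 x w - x = (‖w‖ ^ 2)⁻¹ • w := by
        unfold ZnGlue.inv2
        rw [add_sub_cancel_left]
      rw [h2, ZnGlue.norm_inv_sq_smul hw0] at h1
      have h3 : (0:ℝ) < ‖w‖ := norm_pos_iff.2 hw0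
      calc D⁻¹ ≤ (‖w‖⁻¹)⁻¹ := inv_anti₀ (by positivity) h1
        _ = ‖w‖ := inv_inv _
    · exact Or.inr h
  -- C₁ as an image
  have himage₁ : C₁ = ZnGlue.inv1 x '' (M \ {x}) := by
    ext w
    simp only [hC₁def, mem_setOf_eq, mem_image, mem_diff, mem_singleton_iff]
    constructor
    · intro ⟨hwn, hwM⟩
      have hw0 : w ≠ 0 := by
        intro h0
        rw [h0, norm_zero] at hwn
        exact absurd hwn (not_le.2 hDinv)
      exact ⟨ZnGlue.inv2 x w, ⟨hwM, ZnGlue.inv2_ne x hw0⟩, ZnGlue.inv1_inv2 x hw0⟩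
    · rintro ⟨y, ⟨hyM, hyx⟩, rfl⟩
      refine ⟨hnormM y hyM hyx, ?_⟩
      rw [ZnGlue.inv2_inv1 x hyx]
      exact hyM
  -- preconnectedness of M \ {x}
  have hMx_pre : IsPreconnected (M \ {x}) := by
    apply hint.isPreconnected.subset_closure
    · intro q hq
      exact ⟨interior_subset hq, fun h => hxint ((mem_singleton_iff.1 h) ▸ hq)⟩
    · intro q hq
      rw [← hMcl]
      exact hq.1
  -- preconnectedness of (interior M)ᶜ \ {x}
  have hVx_pre : IsPreconnected ((interior M)ᶜ \ {x}) := by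
    apply hVconn.isPreconnected.subset_closure
    · intro q hq
      exact ⟨fun h => hq (interior_subset h), fun h => hq ((mem_singleton_iff.1 h) ▸ hxM)⟩
    · intro q hq
      rw [closure_compl]
      exact hq.1
  have hinv1cont : ∀ s : Set (Fin n → ℝ), (∀ y ∈ s, y ≠ x) → ContinuousOn (ZnGlue.inv1 x) s :=
    fun s hs y hy => (ZnGlue.inv1_continuousAt x (hs y hy)).continuousWithinAt
  have hC₁pre : IsPreconnected C₁ := by
    rw [himage₁]
    exact hMx_pre.image _ (hinv1cont _ fun y hy => hy.2)
  -- C₂ is squeezed between B and closure B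
  set B : Set (Fin n → ℝ) := ZnGlue.inv1 x '' ((interior M)ᶜ \ {x}) with hBdef
  have hBpre : IsPreconnected B :=
    hVx_pre.image _ (hinv1cont _ fun y hy => hy.2)
  have hBC₂ : B ⊆ C₂ := by
    rintro _ ⟨y, ⟨hyint, hyx⟩, rfl⟩
    simp only [hC₂def, mem_setOf_eq]
    rw [ZnGlue.inv2_inv1 x hyx]
    exact hyint
  have hC₂clB : C₂ ⊆ closure B := by
    intro w hw
    by_cases hw0 : w = 0
    · subst hw0
      rw [Metric.mem_closure_iff]
      intro ε hε
      have hne : Nonempty (Fin n) := ⟨⟨0, by omega⟩⟩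
      set u : Fin n → ℝ := fun _ => 1 with hu
      have hun : ‖u‖ = 1 := by
        rw [hu, pi_norm_const]
        norm_num
      set t : ℝ := D + 1 + 1/ε with ht
      have ht0 : 0 < t := by
        rw [ht]
        have : 0 < 1/ε := by positivity
        linarith
      set y := x + t • u with hy
      have hyx : y ≠ x := by
        intro h
        have : t • u = 0 := by
          have h2 : x + t • u = x + 0 := by rw [add_zero]; exact h
          exact add_left_cancel h2
        have := congrArg norm this
        rw [norm_smul, Real.norm_eq_abs, abs_of_pos ht0, hun, norm_zero, mul_one] at this
        exact absurd this (ne_of_gt ht0)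
      have hynorm : ‖y - x‖ = t := by
        rw [hy, add_sub_cancel_left, norm_smul, Real.norm_eq_abs, abs_of_pos ht0, hun, mul_one]
      have hyM : y ∉ M := by
        intro hyM
        have hb := hMD hyM
        rw [Metric.mem_closedBall, dist_eq_norm, hynorm, ht] at hb
        have hc : 0 < 1/ε := by positivity
        linarith
      refine ⟨ZnGlue.inv1 x y, ⟨y, ⟨fun h => hyM (interior_subset h), hyx⟩, rfl⟩, ?_⟩
      rw [dist_comm, dist_eq_norm, sub_zero, ZnGlue.inv1_norm x hyx, hynorm]
      rw [inv_lt_comm₀ ht0 hε]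
      have h1 : 1/ε < t := by
        rw [ht]
        linarith [hD0]
      rwa [one_div] at h1
    · apply subset_closure
      refine ⟨ZnGlue.inv2 x w, ⟨hw, ZnGlue.inv2_ne x hw0⟩, ZnGlue.inv1_inv2 x hw0⟩
  have hC₂pre : IsPreconnected C₂ := hBpre.subset_closure hBC₂ hC₂clB
  -- apply unicoherence of ℝⁿ
  have hlift : ∀ g : (Fin n → ℝ) → ℂ, Continuous g → (∀ y, ‖g y‖ = 1) →
      ∃ h : (Fin n → ℝ) → ℝ, Continuous h ∧ ∀ y, g y = Complex.exp ((h y : ℂ) * Complex.I) :=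
    fun g hg h1 => ZnAux.exists_lift g hg h1
  have hinter_pre : IsPreconnected (C₁ ∩ C₂) :=
    ZnAux.unicoherence_aux hlift hC₁closed hC₂closed hC₁pre hC₂pre hunion
  -- transfer back
  have himageF : frontier M \ {x} = ZnGlue.inv2 x '' (C₁ ∩ C₂) := by
    ext y
    simp only [mem_diff, mem_singleton_iff, mem_image, mem_inter_iff, hC₁def, hC₂def,
      mem_setOf_eq]
    constructor
    · intro ⟨hyF, hyx⟩
      have hyM : y ∈ M := hFsub hyF
      have hyint : y ∉ interior M := hyF.2
      refine ⟨ZnGlue.inv1 x y, ⟨⟨hnormM y hyM hyx, ?_⟩, ?_⟩, ZnGlue.inv2_inv1 x hyx⟩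
      · rw [ZnGlue.inv2_inv1 x hyx]; exact hyM
      · rw [ZnGlue.inv2_inv1 x hyx]; exact hyint
    · rintro ⟨w, ⟨⟨hwn, hwM⟩, hwint⟩, rfl⟩
      have hw0 : w ≠ 0 := by
        intro h0
        rw [h0, norm_zero] at hwn
        exact absurd hwn (not_le.2 hDinv)
      refine ⟨?_, ZnGlue.inv2_ne x hw0⟩
      rw [hMclosed.frontier_eq]
      exact ⟨hwM, hwint⟩
  refine ⟨hFne, ?_⟩
  rw [himageF]
  apply hinter_pre.image
  intro w hw
  exact (ZnGlue.inv2_continuousAt x (hC₁ne0 w hw.1)).continuousWithinAt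
end

section
/- Let T = T(A,D) be a self-affine ℤⁿ-tile defined by A·T = T + D with maps φ_d(x) = A⁻¹(x + d). If there exists a connected set E ⊂ int(T) such that E ∩ φ_d(E) ≠ ∅ for each d ∈ D, then int(T) is connected. -/
open Set Matrix

/-- The real matrix obtained from an integer matrix. -/
def intMatToReal {n : ℕ} (A : Matrix (Fin n) (Fin n) ℤ) : Matrix (Fin n) (Fin n) ℝ :=
  A.map (Int.cast : ℤ → ℝ)

open Polynomial Filter

section Decay
attribute [local instance] Matrix.linftyOpNormedRing Matrix.linftyOpNormedAlgebra

variable {n : ℕ}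

lemma eval_charpoly' (M : Matrix (Fin n) (Fin n) ℂ) (μ : ℂ) :
    M.charpoly.eval μ = (algebraMap ℂ (Matrix (Fin n) (Fin n) ℂ) μ - M).det := by
  rw [Matrix.charpoly, ← Polynomial.coe_evalRingHom, RingHom.map_det]
  congr 1
  ext i j
  by_cases h : i = j <;>
    simp [charmatrix_apply, algebraMap_matrix_apply, h, Matrix.diagonal_apply]

lemma spectrum_subset_roots (M : Matrix (Fin n) (Fin n) ℂ) (μ : ℂ) (h : μ ∈ spectrum ℂ M) :
    μ ∈ M.charpoly.roots := by
  rw [Polynomial.mem_roots (M.charpoly_monic.ne_zero), Polynomial.IsRoot.def, eval_charpoly']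
  rw [spectrum.mem_iff] at h
  by_contra hdet
  exact h ((Matrix.isUnit_iff_isUnit_det _).mpr (isUnit_iff_ne_zero.mpr hdet))

end Decay

section Decay2
attribute [local instance] Matrix.linftyOpNormedRing Matrix.linftyOpNormedAlgebra

lemma decay (n : ℕ) (A : Matrix (Fin n) (Fin n) ℤ)
    (hexp : ∀ μ ∈ (A.map (Int.cast : ℤ → ℂ)).charpoly.roots, 1 < ‖μ‖) :
    IsUnit (intMatToReal A).det ∧
    ∃ c : ℕ → ℝ, Filter.Tendsto c Filter.atTop (nhds 0) ∧ (∀ k, 0 ≤ c k) ∧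
      ∀ (k : ℕ) (v : Fin n → ℝ), ‖((intMatToReal A)⁻¹ ^ k).mulVec v‖ ≤ c k * ‖v‖ := by
  set B := intMatToReal A with hB
  set Bc := A.map (Int.cast : ℤ → ℂ) with hBc
  have hmap : B.map (Complex.ofReal) = Bc := by
    ext i j; simp [hB, hBc, intMatToReal]
  have hmm : ∀ M : Matrix (Fin n) (Fin n) ℝ,
      M.map (Complex.ofReal) = Complex.ofRealHom.mapMatrix M := fun _ => rfl
  have hdetc : Bc.det ≠ 0 := by
    rw [Matrix.det_eq_prod_roots_charpoly]
    refine Multiset.prod_ne_zero fun h0 => ?_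
    exact absurd (hexp 0 h0) (by simp)
  have hdetR : IsUnit B.det := by
    refine isUnit_iff_ne_zero.mpr fun h => hdetc ?_
    rw [← hmap, hmm, ← RingHom.map_det, h]
    simp
  refine ⟨hdetR, ?_⟩
  set C := B⁻¹ with hC
  set Cc := C.map (Complex.ofReal) with hCc
  have h1 : B * C = 1 := Matrix.mul_nonsing_inv _ hdetR
  have h2 : C * B = 1 := Matrix.nonsing_inv_mul _ hdetR
  have h1c : Bc * Cc = 1 := by
    rw [← hmap, hCc, hmm, hmm, ← _root_.map_mul, h1, _root_.map_one]
  have h2c : Cc * Bc = 1 := by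
    rw [← hmap, hCc, hmm, hmm, ← _root_.map_mul, h2, _root_.map_one]
  set u : (Matrix (Fin n) (Fin n) ℂ)ˣ := ⟨Bc, Cc, h1c, h2c⟩ with hu
  have hσ : spectrum ℂ Cc = (spectrum ℂ Bc)⁻¹ := (spectrum.map_inv u).symm
  have hρ : spectralRadius ℂ Cc < 1 := by
    rcases Set.eq_empty_or_nonempty (spectrum ℂ Cc) with hs | hs
    · rw [spectralRadius]
      simp [hs]
    · obtain ⟨k, hk, hkρ⟩ := spectrum.exists_nnnorm_eq_spectralRadius_of_nonempty hs
      rw [← hkρ]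
      rw [hσ, Set.mem_inv] at hk
      have habs := hexp _ (spectrum_subset_roots _ _ hk)
      have hk0 : k ≠ 0 := by
        rintro rfl; simp at habs; linarith
      have : ‖k‖ < 1 := by
        rw [norm_inv] at habs
        have h0 : 0 < ‖k‖ := norm_pos_iff.mpr hk0
        rw [one_lt_inv_iff₀] at habs
        exact habs.2
      exact_mod_cast ENNReal.coe_lt_one_iff.mpr (by rw [← NNReal.coe_lt_coe, coe_nnnorm, NNReal.coe_one]; exact this)
  have gelfand := spectrum.pow_nnnorm_pow_one_div_tendsto_nhds_spectralRadius Cc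
  obtain ⟨c, hc1, hc2⟩ := exists_between hρ
  have hcne : c ≠ ⊤ := (hc2.trans_le le_top).ne
  set r : NNReal := c.toNNReal with hrdef
  have hcr : c = (r : ENNReal) := (ENNReal.coe_toNNReal hcne).symm
  have hr1 : (r : ℝ) < 1 := by
    have : (r : ENNReal) < 1 := hcr ▸ hc2
    exact_mod_cast this
  have hev : ∀ᶠ (k : ℕ) in Filter.atTop, (‖Cc ^ k‖₊ : ENNReal) ^ (1/(k:ℝ)) < c :=
    gelfand.eventually_lt_const hc1
  have hbound : ∀ᶠ (k : ℕ) in Filter.atTop, ‖Cc ^ k‖ ≤ (r:ℝ) ^ k := by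
    filter_upwards [hev, Filter.eventually_ge_atTop 1] with k hlt hk1
    have hk0 : (k : ℝ) ≠ 0 := Nat.cast_ne_zero.mpr (by omega)
    have hx : (‖Cc ^ k‖₊ : ENNReal) ≤ c ^ (k : ℝ) := by
      calc (‖Cc ^ k‖₊ : ENNReal) = (‖Cc ^ k‖₊ : ENNReal) ^ ((1/(k:ℝ)) * (k:ℝ)) := by
            rw [one_div_mul_cancel hk0, ENNReal.rpow_one]
        _ = ((‖Cc ^ k‖₊ : ENNReal) ^ (1/(k:ℝ))) ^ (k:ℝ) := ENNReal.rpow_mul _ _ _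
        _ ≤ c ^ (k:ℝ) := ENNReal.rpow_le_rpow hlt.le (Nat.cast_nonneg k)
    rw [hcr, ENNReal.rpow_natCast, ← ENNReal.coe_pow] at hx
    have hx3 : ‖Cc ^ k‖₊ ≤ r ^ k := ENNReal.coe_le_coe.mp hx
    exact_mod_cast hx3
  have hnorm_eq : ∀ k : ℕ, ‖C ^ k‖ = ‖Cc ^ k‖ := by
    intro k
    have hpow : Cc ^ k = (C ^ k).map Complex.ofReal := by
      rw [hCc, hmm, hmm, ← _root_.map_pow]
    rw [hpow, Matrix.linfty_opNorm_def, Matrix.linfty_opNorm_def]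
    congr 1
    apply Finset.sup_congr rfl
    intro i _
    apply Finset.sum_congr rfl
    intro j _
    simp [Matrix.map_apply]
  refine ⟨fun k => ‖C ^ k‖, ?_, fun k => norm_nonneg _, ?_⟩
  · refine squeeze_zero' (Filter.Eventually.of_forall fun k => norm_nonneg _) ?_
      (tendsto_pow_atTop_nhds_zero_of_lt_one r.coe_nonneg hr1)
    filter_upwards [hbound] with k h
    rw [hnorm_eq]; exact h
  · intro k v
    exact Matrix.linfty_opNorm_mulVec _ _

end Decay2

/-- if there is a connected set `E ⊆ int(T)` with `E ∩ φ_d(E) ≠ ∅` for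
each digit `d ∈ D` (where `φ_d(x) = A⁻¹(x + d)`), then `int(T)` is connected. -/
theorem interior_connected_of_chain (n : ℕ) (A : Matrix (Fin n) (Fin n) ℤ)
    (hexp : ∀ μ ∈ (A.map (Int.cast : ℤ → ℂ)).charpoly.roots, 1 < ‖μ‖)
    (D : Set (Fin n → ℤ))
    (hD : ∀ z : Fin n → ℤ, ∃! d, d ∈ D ∧ ∃ y : Fin n → ℤ, z = d + A.mulVec y)
    (T : Set (Fin n → ℝ)) (hTne : T.Nonempty) (hTc : IsCompact T)
    (hTset : (fun x => (intMatToReal A).mulVec x) '' T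
      = ⋃ d ∈ D, (fun x => x + intVecToReal d) '' T)
    (E : Set (Fin n → ℝ)) (hE : IsConnected E) (hEint : E ⊆ interior T)
    (hmeet : ∀ d ∈ D,
      (E ∩ (fun x => (intMatToReal A)⁻¹.mulVec (x + intVecToReal d)) '' E).Nonempty) :
    IsConnected (interior T) := by
  obtain ⟨hdetR, c, hctend, hcnn, hcbound⟩ := decay n A hexp
  set B := intMatToReal A with hB
  set C := B⁻¹ with hC
  have h1 : B * C = 1 := Matrix.mul_nonsing_inv _ hdetR
  have h2 : C * B = 1 := Matrix.nonsing_inv_mul _ hdetR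
  set φ : (Fin n → ℤ) → (Fin n → ℝ) → (Fin n → ℝ) :=
    fun d x => C.mulVec (x + intVecToReal d) with hφ
  have hcontM : ∀ M : Matrix (Fin n) (Fin n) ℝ,
      Continuous (fun x : Fin n → ℝ => M.mulVec x) := fun M => by
    exact (Matrix.mulVecLin M).continuous_of_finiteDimensional
  have φcont : ∀ d, Continuous (φ d) :=
    fun d => (hcontM C).comp (continuous_id.add continuous_const)
  -- the homeomorphism
  set ψ : (Fin n → ℤ) → (Fin n → ℝ) → (Fin n → ℝ) :=
    fun d x => B.mulVec x - intVecToReal d with hψ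
  have hlr : ∀ d x, ψ d (φ d x) = x := by
    intro d x
    simp only [hφ, hψ, Matrix.mulVec_mulVec, h1, Matrix.one_mulVec]
    abel
  have hrl : ∀ d x, φ d (ψ d x) = x := by
    intro d x
    simp only [hφ, hψ, sub_add_cancel, Matrix.mulVec_mulVec, h2, Matrix.one_mulVec]
  set e : (Fin n → ℤ) → ((Fin n → ℝ) ≃ₜ (Fin n → ℝ)) := fun d =>
    { toFun := φ d
      invFun := ψ d
      left_inv := hlr d
      right_inv := hrl d
      continuous_toFun := φcont d
      continuous_invFun := (hcontM B).sub continuous_const } with he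
  -- subdivision structure
  have hsubT : ∀ d ∈ D, φ d '' T ⊆ T := by
    rintro d hd - ⟨t, ht, rfl⟩
    have : t + intVecToReal d ∈ (fun x => B.mulVec x) '' T := by
      rw [hTset]
      exact Set.mem_biUnion hd ⟨t, ht, rfl⟩
    obtain ⟨s, hs, hst⟩ := this
    have : φ d t = s := by
      rw [hφ]; simp only [← hst, Matrix.mulVec_mulVec, h2, Matrix.one_mulVec]
    rwa [this]
  have hcov : ∀ t ∈ T, ∃ d ∈ D, ∃ s ∈ T, t = φ d s := by
    intro t ht
    have : B.mulVec t ∈ ⋃ d ∈ D, (fun x => x + intVecToReal d) '' T := by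
      rw [← hTset]; exact ⟨t, ht, rfl⟩
    obtain ⟨d, hd, hmem⟩ := Set.mem_iUnion₂.mp this
    obtain ⟨s, hs, hst⟩ := hmem
    refine ⟨d, hd, s, hs, ?_⟩
    have : φ d s = C.mulVec (B.mulVec t) := by rw [hφ]; simp only [hst]
    rw [this, Matrix.mulVec_mulVec, h2, Matrix.one_mulVec]
  -- words
  set Φ : List (Fin n → ℤ) → (Fin n → ℝ) → (Fin n → ℝ) :=
    fun l x => l.foldr (fun d y => φ d y) x with hΦ
  have hΦnil : ∀ x, Φ [] x = x := fun _ => rfl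
  have hΦcons : ∀ d l x, Φ (d :: l) x = φ d (Φ l x) := fun _ _ _ => rfl
  have hcovk : ∀ k : ℕ, ∀ t ∈ T, ∃ l : List (Fin n → ℤ),
      l.length = k ∧ (∀ d ∈ l, d ∈ D) ∧ ∃ s ∈ T, t = Φ l s := by
    intro k
    induction k with
    | zero => exact fun t ht => ⟨[], rfl, by simp, t, ht, rfl⟩
    | succ k ih =>
      intro t ht
      obtain ⟨d, hd, s, hs, rfl⟩ := hcov t ht
      obtain ⟨l, hlen, hlD, s', hs', rfl⟩ := ih s hs
      exact ⟨d :: l, by simp [hlen], by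
        intro d' hd'
        rcases List.mem_cons.mp hd' with h | h
        · exact h ▸ hd
        · exact hlD d' h, s', hs', rfl⟩
  have hdiff : ∀ l : List (Fin n → ℤ), ∀ a b,
      Φ l a - Φ l b = (C ^ l.length).mulVec (a - b) := by
    intro l
    induction l with
    | nil => intro a b; simp [hΦnil]
    | cons d l ih =>
      intro a b
      rw [hΦcons, hΦcons, hφ]
      simp only [← Matrix.mulVec_sub]
      rw [add_sub_add_right_eq_sub, ih a b, Matrix.mulVec_mulVec, List.length_cons,
        ← pow_succ']
  -- basic nonemptiness
  obtain ⟨d0, ⟨hd0D, -⟩, -⟩ := hD 0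
  obtain ⟨x0, hx0E⟩ := hE.nonempty
  -- the connected core
  set U : Set (Fin n → ℝ) :=
    ⋃ (l : List (Fin n → ℤ)) (_ : ∀ d ∈ l, d ∈ D), Φ l '' E with hU
  have hEU : E ⊆ U := by
    intro x hx
    exact Set.mem_iUnion₂.mpr ⟨[], by simp, x, hx, rfl⟩
  have hintsub : ∀ d ∈ D, φ d '' interior T ⊆ interior T := by
    intro d hd
    have : φ d '' interior T = interior (φ d '' T) := (e d).image_interior T
    rw [this]
    exact interior_mono (hsubT d hd)
  have hUint : U ⊆ interior T := by
    refine Set.iUnion₂_subset ?_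
    intro l
    induction l with
    | nil => intro _; rintro - ⟨x, hx, rfl⟩; exact hEint hx
    | cons d l ih =>
      intro hl
      have hd : d ∈ D := hl d (List.mem_cons_self)
      have hl' : ∀ d' ∈ l, d' ∈ D := fun d' h => hl d' (List.mem_cons_of_mem d h)
      have : Φ (d :: l) '' E = φ d '' (Φ l '' E) := by
        rw [Set.image_image]; rfl
      rw [this]
      exact (Set.image_mono (ih hl')).trans (hintsub d hd)
  have hUmap : ∀ d ∈ D, ∀ y ∈ U, φ d y ∈ U := by
    intro d hd y hy
    obtain ⟨l, hl, x, hx, rfl⟩ := Set.mem_iUnion₂.mp hy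
    refine Set.mem_iUnion₂.mpr ⟨d :: l, ?_, x, hx, rfl⟩
    intro d' hd'
    rcases List.mem_cons.mp hd' with h | h
    · exact h ▸ hd
    · exact hl d' h
  -- the chain sets
  set R : List (Fin n → ℤ) → Set (Fin n → ℝ) :=
    fun l => l.foldr (fun d S => E ∪ φ d '' S) E with hR
  have hRfacts : ∀ l : List (Fin n → ℤ), (∀ d ∈ l, d ∈ D) →
      IsConnected (R l) ∧ R l ⊆ U ∧ Φ l '' E ⊆ R l ∧ E ⊆ R l := by
    intro l
    induction l with
    | nil =>
      refine fun _ => ⟨hE, hEU, ?_, le_refl E⟩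
      rintro y ⟨x, hx, rfl⟩
      exact hx
    | cons d l ih =>
      intro hl
      have hd : d ∈ D := hl d (List.mem_cons_self)
      obtain ⟨ihc, ihU, ihΦ, ihE⟩ := ih (fun d' h => hl d' (List.mem_cons_of_mem d h))
      have hRc : R (d :: l) = E ∪ φ d '' R l := rfl
      have himg : IsConnected (φ d '' R l) := ihc.image (φ d) (φcont d).continuousOn
      have hne : (E ∩ φ d '' R l).Nonempty := by
        obtain ⟨z, hz1, hz2⟩ := hmeet d hd
        exact ⟨z, hz1, Set.image_mono ihE hz2⟩
      refine ⟨hRc ▸ hE.union hne himg, ?_, ?_, ?_⟩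
      · rw [hRc]
        refine Set.union_subset hEU ?_
        rintro - ⟨y, hy, rfl⟩
        exact hUmap d hd y (ihU hy)
      · rw [hRc]
        have : Φ (d :: l) '' E = φ d '' (Φ l '' E) := by rw [Set.image_image]; rfl
        rw [this]
        exact (Set.image_mono ihΦ).trans Set.subset_union_right
      · rw [hRc]; exact Set.subset_union_left
  have hUconn : IsPreconnected U := by
    refine isPreconnected_of_forall x0 ?_
    intro y hy
    obtain ⟨l, hl, hyl⟩ := Set.mem_iUnion₂.mp hy
    obtain ⟨hc, hu, hΦl, hEl⟩ := hRfacts l hl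
    exact ⟨R l, hu, hEl hx0E, hΦl hyl, hc.isPreconnected⟩
  -- interior T is inside the closure of U
  obtain ⟨Cb, hCb⟩ := isBounded_iff_forall_norm_le.mp hTc.isBounded
  have hclos : interior T ⊆ closure U := by
    intro x hx
    rw [Metric.mem_closure_iff]
    intro ε hε
    have hMpos : (0:ℝ) < 2 * Cb + 1 := by
      have : (0:ℝ) ≤ Cb := le_trans (norm_nonneg _) (hCb _ hTne.choose_spec)
      linarith
    obtain ⟨k, hk⟩ := (hctend.eventually_lt_const (show 0 < ε / (2 * Cb + 1) by positivity)).exists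
    obtain ⟨l, hlen, hlD, s, hs, hxl⟩ := hcovk k x (interior_subset hx)
    refine ⟨Φ l x0, Set.mem_iUnion₂.mpr ⟨l, hlD, x0, hx0E, rfl⟩, ?_⟩
    rw [dist_eq_norm, hxl, hdiff l s x0, hlen]
    have hx0T : x0 ∈ T := interior_subset (hEint hx0E)
    have hsx0 : ‖s - x0‖ ≤ 2 * Cb := by
      calc ‖s - x0‖ ≤ ‖s‖ + ‖x0‖ := norm_sub_le _ _
        _ ≤ Cb + Cb := add_le_add (hCb s hs) (hCb x0 hx0T)
        _ = 2 * Cb := by ring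
    calc ‖(C ^ k).mulVec (s - x0)‖ ≤ c k * ‖s - x0‖ := hcbound k _
      _ ≤ c k * (2 * Cb + 1) := by
          have := hcnn k
          nlinarith
      _ < (ε / (2 * Cb + 1)) * (2 * Cb + 1) := by
          exact mul_lt_mul_of_pos_right hk hMpos
      _ = ε := by field_simp
  exact ⟨⟨x0, hEint hx0E⟩, hUconn.subset_closure hUint hclos⟩
end

section
/- Let T = T(A,D) be a self-affine ℤⁿ-tile with subdivision operator P defined on its neighbor structure 𝒦(T) by P(S) = {(p+A)(S) ∈ 𝒦(T) : p ∈ D^S}, where (p+A)(s) = p(s) + A s. Then for every S ∈ 𝒦(T), the simplicial boundary satisfies δ(P(S)) = P(δ S). -/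
open Set Matrix

/-- The cell `⟨S⟩ = ⋂_{s∈S} (T+s)`. -/
def cellOf {n : ℕ} (T : Set (Fin n → ℝ)) (S : Set (Fin n → ℤ)) : Set (Fin n → ℝ) :=
  ⋂ s ∈ S, (fun x => x + intVecToReal s) '' T

/-- The neighbor structure `𝒦(T)`: nonempty `S ⊆ ℤⁿ` with `⟨S⟩ ≠ ∅`. -/
def neighborStructure {n : ℕ} (T : Set (Fin n → ℝ)) : Set (Set (Fin n → ℤ)) :=
  {S | S.Nonempty ∧ (cellOf T S).Nonempty}

/-- The subdivision operator `P(S) = {(p+A)(S) ∈ 𝒦(T) ∣ p ∈ D^S}`. -/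
def subdivOp {n : ℕ} (A : Matrix (Fin n) (Fin n) ℤ) (D : Set (Fin n → ℤ))
    (T : Set (Fin n → ℝ)) (S : Set (Fin n → ℤ)) : Set (Set (Fin n → ℤ)) :=
  {S' | S' ∈ neighborStructure T ∧ ∃ p : (Fin n → ℤ) → (Fin n → ℤ),
    (∀ s ∈ S, p s ∈ D) ∧ S' = (fun s => p s + A.mulVec s) '' S}

/-- The simplicial boundary `δS = {S ∪ {x} ∣ x ∈ ℤⁿ \ S} ∩ 𝒦(T)` of a cell. -/
def deltaCell {n : ℕ} (T : Set (Fin n → ℝ)) (S : Set (Fin n → ℤ)) :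
    Set (Set (Fin n → ℤ)) :=
  {S' | S' ∈ neighborStructure T ∧ ∃ x ∉ S, S' = S ∪ {x}}

/-- The simplicial boundary of a collection of cells. -/
def deltaColl {n : ℕ} (T : Set (Fin n → ℝ)) (𝒞 : Set (Set (Fin n → ℤ))) :
    Set (Set (Fin n → ℤ)) :=
  {S' | S' ∈ neighborStructure T ∧
    ∃ S ∈ 𝒞, ∃ x, x ∉ (⋃ S'' ∈ 𝒞, S'') ∧ S' = S ∪ {x}}

/-- The subdivision operator extended to collections. -/
def subdivColl {n : ℕ} (A : Matrix (Fin n) (Fin n) ℤ) (D : Set (Fin n → ℤ))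
    (T : Set (Fin n → ℝ)) (𝒞 : Set (Set (Fin n → ℤ))) : Set (Set (Fin n → ℤ)) :=
  {S' | ∃ S ∈ 𝒞, S' ∈ subdivOp A D T S}

lemma castDet {n : ℕ} (R : Type*) [CommRing R] (A : Matrix (Fin n) (Fin n) ℤ) :
    (A.map (Int.cast : ℤ → R)).det = ((A.det : ℤ) : R) :=
  (RingHom.map_det (Int.castRingHom R) A).symm

lemma castMulVec {n : ℕ} (R : Type*) [CommRing R] (A : Matrix (Fin n) (Fin n) ℤ)
    (v : Fin n → ℤ) :
    (A.map (Int.cast : ℤ → R)).mulVec ((Int.cast : ℤ → R) ∘ v)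
      = (Int.cast : ℤ → R) ∘ (A.mulVec v) := by
  funext i
  exact (RingHom.map_mulVec (Int.castRingHom R) A v i).symm

lemma detA_ne {n : ℕ} {A : Matrix (Fin n) (Fin n) ℤ}
    (hexp : ∀ μ ∈ (A.map (Int.cast : ℤ → ℂ)).charpoly.roots, 1 < ‖μ‖) :
    A.det ≠ 0 := by
  intro h
  have h2 := Matrix.det_eq_prod_roots_charpoly (A := A.map (Int.cast : ℤ → ℂ))
  rw [castDet, h, Int.cast_zero] at h2
  have h0 := Multiset.prod_eq_zero_iff.mp h2.symm
  have := hexp 0 h0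
  simp only [norm_zero] at this
  linarith

lemma intMulVec_inj {n : ℕ} {A : Matrix (Fin n) (Fin n) ℤ} (hdet : A.det ≠ 0) :
    Function.Injective A.mulVec := by
  intro x y hxy
  have hQ : ((A.map (Int.cast : ℤ → ℚ)).det : ℚ) ≠ 0 := by
    rw [castDet]
    exact_mod_cast hdet
  have hinj : Function.Injective (A.map (Int.cast : ℤ → ℚ)).mulVec :=
    Matrix.mulVec_injective_iff_isUnit.mpr
      ((Matrix.isUnit_iff_isUnit_det _).mpr (isUnit_iff_ne_zero.mpr hQ))
  have h2 : (Int.cast : ℤ → ℚ) ∘ x = (Int.cast : ℤ → ℚ) ∘ y := by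
    apply hinj
    rw [castMulVec, castMulVec, hxy]
  funext i
  simpa using congrFun h2 i

lemma ivr_add {n : ℕ} (a b : Fin n → ℤ) :
    intVecToReal (a + b) = intVecToReal a + intVecToReal b := by
  funext i; simp [intVecToReal]

lemma imr_mulVec {n : ℕ} (A : Matrix (Fin n) (Fin n) ℤ) (v : Fin n → ℤ) :
    intVecToReal (A.mulVec v) = (intMatToReal A).mulVec (intVecToReal v) :=
  (castMulVec ℝ A v).symm

lemma cellOf_anti {n : ℕ} (T : Set (Fin n → ℝ)) {S₁ S₂ : Set (Fin n → ℤ)}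
    (h : S₁ ⊆ S₂) : cellOf T S₂ ⊆ cellOf T S₁ := by
  intro z hz
  simp only [cellOf, mem_iInter] at hz ⊢
  exact fun s hs => hz s (h hs)

lemma cell_pull {n : ℕ} {A : Matrix (Fin n) (Fin n) ℤ} (hdet : A.det ≠ 0)
    {D : Set (Fin n → ℤ)} {T : Set (Fin n → ℝ)}
    (hTset : (fun x => (intMatToReal A).mulVec x) '' T
      = ⋃ d ∈ D, (fun x => x + intVecToReal d) '' T)
    (S₀ : Set (Fin n → ℤ)) (q : (Fin n → ℤ) → (Fin n → ℤ))
    (hq : ∀ s ∈ S₀, q s ∈ D)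
    (hcell : (cellOf T ((fun s => q s + A.mulVec s) '' S₀)).Nonempty) :
    (cellOf T S₀).Nonempty := by
  obtain ⟨z, hz⟩ := hcell
  have hRdet : IsUnit (intMatToReal A).det := by
    rw [intMatToReal, castDet]
    exact isUnit_iff_ne_zero.mpr (by exact_mod_cast hdet)
  have : Invertible (intMatToReal A) := Matrix.invertibleOfIsUnitDet _ hRdet
  refine ⟨(intMatToReal A)⁻¹.mulVec z, ?_⟩
  simp only [cellOf, mem_iInter] at hz ⊢
  intro s hs
  have hz' := hz _ (mem_image_of_mem _ hs)
  obtain ⟨t, ht, hteq⟩ := hz'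
  have hmem : t + intVecToReal (q s) ∈ ⋃ d ∈ D, (fun x => x + intVecToReal d) '' T :=
    mem_biUnion (hq s hs) ⟨t, ht, rfl⟩
  rw [← hTset] at hmem
  obtain ⟨u, hu, huq⟩ := hmem
  have hzeq : (intMatToReal A).mulVec (u + intVecToReal s) = z := by
    simp only [] at huq hteq
    rw [Matrix.mulVec_add, huq, ← imr_mulVec, ← hteq, ivr_add]
    abel
  have : u + intVecToReal s = (intMatToReal A)⁻¹.mulVec z := by
    rw [← hzeq, Matrix.mulVec_mulVec, Matrix.inv_mul_of_invertible, Matrix.one_mulVec]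
  exact ⟨u, hu, this⟩

/-- `δ(P(S)) = P(δS)` for every `S` in the neighbor structure of a
self-affine `ℤⁿ`-tile. -/
theorem delta_subdiv_comm (n : ℕ) (A : Matrix (Fin n) (Fin n) ℤ)
    (hexp : ∀ μ ∈ (A.map (Int.cast : ℤ → ℂ)).charpoly.roots, 1 < ‖μ‖)
    (D : Set (Fin n → ℤ))
    (hD : ∀ z : Fin n → ℤ, ∃! d, d ∈ D ∧ ∃ y : Fin n → ℤ, z = d + A.mulVec y)
    (T : Set (Fin n → ℝ)) (hTne : T.Nonempty) (hTc : IsCompact T)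
    (hTset : (fun x => (intMatToReal A).mulVec x) '' T
      = ⋃ d ∈ D, (fun x => x + intVecToReal d) '' T)
    (S : Set (Fin n → ℤ)) (hS : S ∈ neighborStructure T) :
    deltaColl T (subdivOp A D T S) = subdivColl A D T (deltaCell T S) := by
  classical
  obtain ⟨hSne, hScell⟩ := hS
  have hdet : A.det ≠ 0 := detA_ne hexp
  have hinj : Function.Injective A.mulVec := intMulVec_inj hdet
  ext S'
  constructor
  · rintro ⟨hS'K, S₂, ⟨hS₂K, p, hpD, rfl⟩, y, hy, rfl⟩
    obtain ⟨d, ⟨hdD, x, hyx⟩, _⟩ := hD y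
    set q : (Fin n → ℤ) → (Fin n → ℤ) := fun s => if s = x then d else p s with hqdef
    have hximg : q x + A.mulVec x = y := by
      simp only [hqdef, if_pos rfl]
      exact hyx.symm
    have hx : x ∉ S := by
      intro hxS
      apply hy
      have hsub : (fun s => q s + A.mulVec s) '' S
          ⊆ ((fun s => p s + A.mulVec s) '' S) ∪ {y} := by
        rintro _ ⟨s, hs, rfl⟩
        by_cases h : s = x
        · right
          subst h
          exact hximg
        · left
          exact ⟨s, hs, by simp [hqdef, h]⟩
      have hmemK : (fun s => q s + A.mulVec s) '' S ∈ subdivOp A D T S := by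
        refine ⟨⟨hSne.image _, ?_⟩, q, ?_, rfl⟩
        · obtain ⟨z, hz⟩ := hS'K.2
          exact ⟨z, cellOf_anti T hsub hz⟩
        · intro s hs
          by_cases h : s = x
          · simpa [hqdef, h] using hdD
          · simpa [hqdef, h] using hpD s hs
      exact mem_biUnion hmemK ⟨x, hxS, hximg⟩
    have hqD : ∀ s ∈ S ∪ {x}, q s ∈ D := by
      intro s hs
      by_cases h : s = x
      · simpa [hqdef, h] using hdD
      · rcases hs with hs | hs
        · simpa [hqdef, h] using hpD s hs
        · exact absurd hs h
    have himg : (fun s => q s + A.mulVec s) '' (S ∪ {x})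
        = ((fun s => p s + A.mulVec s) '' S) ∪ {y} := by
      rw [Set.image_union, Set.image_singleton, hximg]
      congr 1
      apply Set.image_congr
      intro s hs
      have h : s ≠ x := fun h => hx (h ▸ hs)
      simp [hqdef, h]
    refine ⟨S ∪ {x}, ⟨⟨hSne.inl, ?_⟩, x, hx, rfl⟩, hS'K, q, hqD, himg.symm⟩
    refine cell_pull hdet hTset (S ∪ {x}) q hqD ?_
    rw [himg]
    exact hS'K.2
  · rintro ⟨S₁, ⟨hS₁K, x, hx, rfl⟩, hS'K, p, hpD, rfl⟩
    have himg : (fun s => p s + A.mulVec s) '' (S ∪ {x})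
        = ((fun s => p s + A.mulVec s) '' S) ∪ {p x + A.mulVec x} := by
      rw [Set.image_union, Set.image_singleton]
    refine ⟨hS'K, (fun s => p s + A.mulVec s) '' S,
      ⟨⟨hSne.image _, ?_⟩, p, fun s hs => hpD s (Or.inl hs), rfl⟩,
      p x + A.mulVec x, ?_, himg⟩
    · obtain ⟨z, hz⟩ := hS'K.2
      exact ⟨z, cellOf_anti T (by rw [himg]; exact subset_union_left) hz⟩
    · intro hy
      rw [mem_iUnion₂] at hy
      obtain ⟨S₃, hS₃, hyS₃⟩ := hy
      obtain ⟨_, r, hrD, rfl⟩ := hS₃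
      obtain ⟨s, hs, heq⟩ := hyS₃
      obtain ⟨d0, _, hun⟩ := hD (p x + A.mulVec x)
      have h1 : p x = d0 := hun (p x) ⟨hpD x (Or.inr rfl), x, rfl⟩
      have h2 : r s = d0 := hun (r s) ⟨hrD s hs, s, heq.symm⟩
      have hps : r s = p x := h2.trans h1.symm
      have : A.mulVec s = A.mulVec x := by
        have heq' : r s + A.mulVec s = p x + A.mulVec x := heq
        rw [hps] at heq'
        exact add_left_cancel heq'
      exact hx ((hinj this) ▸ hs)
end
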